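/- arXiv:1811.12226 — 5 statements merged into one kernel-verified Lean document; each statement's English description precedes it below -/
import Mathlib

section
/- The group E₂(Γ₄(ℤ)) is isomorphic to E₂(ℒ), the subgroup of the unit group of M₂(ℒ) generated by the matrices E(x) for x ∈ ℒ, where ℒ is the ring of Lipschitz quaternions. -/
noncomputable section

open CliffordAlgebra

/-- The quadratic form `-(x₀² + ⋯ + x_{n-2}²)` on `ℤ^{n-1}`. -/
def Qf (n : ℕ) : QuadraticForm ℤ (Fin (n - 1) → ℤ) :=
  QuadraticMap.weightedSumSquares ℤ (fun _ : Fin (n - 1) => (-1 : ℤ))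

/-- The Clifford algebra `C_n(ℤ)`. -/
abbrev Cl (n : ℕ) := CliffordAlgebra (Qf n)

/-- The generator `i_h` of `C_n(ℤ)`. -/
def iGen (n : ℕ) (h : Fin (n - 1)) : Cl n := ι (Qf n) (Pi.single h 1)

/-- The submodule `Vⁿ(ℤ)` spanned by `1, i_1, …, i_{n-1}`. -/
def Vn (n : ℕ) : Submodule ℤ (Cl n) :=
  Submodule.span ℤ (insert 1 (Set.range (iGen n)))

/-- The elementary unit `E(x)`. -/
def Eu (n : ℕ) (x : Cl n) : (Matrix (Fin 2) (Fin 2) (Cl n))ˣ where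
  val := !![x, 1; -1, 0]
  inv := !![0, -1; 1, x]
  val_inv := by
    ext i j
    fin_cases i <;> fin_cases j <;>
      simp [Matrix.mul_apply, Fin.sum_univ_two, Matrix.one_apply]
  inv_val := by
    ext i j
    fin_cases i <;> fin_cases j <;>
      simp [Matrix.mul_apply, Fin.sum_univ_two, Matrix.one_apply]

/-- The group `E₂(Γ_n(ℤ))`. -/
def E2Gamma (n : ℕ) : Subgroup (Matrix (Fin 2) (Fin 2) (Cl n))ˣ :=
  Subgroup.closure {u | ∃ x ∈ Vn n, u = Eu n x}

lemma iGen_sq (n : ℕ) (h : Fin (n - 1)) : iGen n h * iGen n h = -1 := by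
  rw [iGen, ι_sq_scalar]
  have : Qf n (Pi.single h 1) = -1 := by
    simp [Qf, Pi.single_apply]
  rw [this]
  simp

/-- `i_h` as a unit of `C_n(ℤ)`. -/
def iUnit (n : ℕ) (h : Fin (n - 1)) : (Cl n)ˣ where
  val := iGen n h
  inv := -iGen n h
  val_inv := by rw [mul_neg, iGen_sq]; simp
  inv_val := by rw [neg_mul, iGen_sq]; simp

/-- The unit group `U_n` of `Γ_n(ℤ)`, generated by `-1` and the `i_h`. -/
def Un (n : ℕ) : Subgroup (Cl n)ˣ :=
  Subgroup.closure (insert (-1) (Set.range (iUnit n)))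

/-- The elementary unit `E(x)` over a ring `R`. -/
def Em (R : Type*) [Ring R] (x : R) : (Matrix (Fin 2) (Fin 2) R)ˣ where
  val := !![x, 1; -1, 0]
  inv := !![0, -1; 1, x]
  val_inv := by
    ext i j
    fin_cases i <;> fin_cases j <;>
      simp [Matrix.mul_apply, Fin.sum_univ_two, Matrix.one_apply]
  inv_val := by
    ext i j
    fin_cases i <;> fin_cases j <;>
      simp [Matrix.mul_apply, Fin.sum_univ_two, Matrix.one_apply]

/-- The group `E₂(R)` generated by the elementary matrices `E(x)`, `x ∈ R`. -/
def E2 (R : Type*) [Ring R] : Subgroup (Matrix (Fin 2) (Fin 2) R)ˣ :=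
  Subgroup.closure (Set.range (Em R))

open Quaternion

-- helper lemmas: quaternion literals `⟨a, b, c, d⟩ : ℍ[ℤ]` elaborate at type `ℍ[ℤ,-1,0,-1]`
@[simp] lemma qlit_eq (a b : ℍ[ℤ,-1,0,-1]) :
    @Eq ℍ[ℤ] a b ↔ a.re = b.re ∧ a.imI = b.imI ∧ a.imJ = b.imJ ∧ a.imK = b.imK :=
  Quaternion.ext_iff (a := a) (b := b)
@[simp] lemma qlit_add_re (a b : ℍ[ℤ,-1,0,-1]) :
    (@HAdd.hAdd ℍ[ℤ] ℍ[ℤ] ℍ[ℤ] _ a b).re = a.re + b.re := rfl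
@[simp] lemma qlit_neg_re (a : ℍ[ℤ,-1,0,-1]) : (@Neg.neg ℍ[ℤ] _ a).re = -a.re := rfl
@[simp] lemma qlit_smul_re (n : ℤ) (a : ℍ[ℤ,-1,0,-1]) :
    (@HSMul.hSMul ℤ ℍ[ℤ] ℍ[ℤ] _ n a).re = n * a.re := rfl
@[simp] lemma qlit_zsmul_re (n : ℤ) (a : ℍ[ℤ,-1,0,-1]) :
    (@HSMul.hSMul ℤ ℍ[ℤ] ℍ[ℤ] (@instHSMul _ _ (@ZSMul.toSMul _ SubNegMonoid.toZSMul)) n a).re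
      = n * a.re := rfl
@[simp] lemma qlit_add_imI (a b : ℍ[ℤ,-1,0,-1]) :
    (@HAdd.hAdd ℍ[ℤ] ℍ[ℤ] ℍ[ℤ] _ a b).imI = a.imI + b.imI := rfl
@[simp] lemma qlit_neg_imI (a : ℍ[ℤ,-1,0,-1]) : (@Neg.neg ℍ[ℤ] _ a).imI = -a.imI := rfl
@[simp] lemma qlit_smul_imI (n : ℤ) (a : ℍ[ℤ,-1,0,-1]) :
    (@HSMul.hSMul ℤ ℍ[ℤ] ℍ[ℤ] _ n a).imI = n * a.imI := rfl
@[simp] lemma qlit_zsmul_imI (n : ℤ) (a : ℍ[ℤ,-1,0,-1]) :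
    (@HSMul.hSMul ℤ ℍ[ℤ] ℍ[ℤ] (@instHSMul _ _ (@ZSMul.toSMul _ SubNegMonoid.toZSMul)) n a).imI
      = n * a.imI := rfl
@[simp] lemma qlit_add_imJ (a b : ℍ[ℤ,-1,0,-1]) :
    (@HAdd.hAdd ℍ[ℤ] ℍ[ℤ] ℍ[ℤ] _ a b).imJ = a.imJ + b.imJ := rfl
@[simp] lemma qlit_neg_imJ (a : ℍ[ℤ,-1,0,-1]) : (@Neg.neg ℍ[ℤ] _ a).imJ = -a.imJ := rfl
@[simp] lemma qlit_smul_imJ (n : ℤ) (a : ℍ[ℤ,-1,0,-1]) :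
    (@HSMul.hSMul ℤ ℍ[ℤ] ℍ[ℤ] _ n a).imJ = n * a.imJ := rfl
@[simp] lemma qlit_zsmul_imJ (n : ℤ) (a : ℍ[ℤ,-1,0,-1]) :
    (@HSMul.hSMul ℤ ℍ[ℤ] ℍ[ℤ] (@instHSMul _ _ (@ZSMul.toSMul _ SubNegMonoid.toZSMul)) n a).imJ
      = n * a.imJ := rfl
@[simp] lemma qlit_add_imK (a b : ℍ[ℤ,-1,0,-1]) :
    (@HAdd.hAdd ℍ[ℤ] ℍ[ℤ] ℍ[ℤ] _ a b).imK = a.imK + b.imK := rfl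
@[simp] lemma qlit_neg_imK (a : ℍ[ℤ,-1,0,-1]) : (@Neg.neg ℍ[ℤ] _ a).imK = -a.imK := rfl
@[simp] lemma qlit_smul_imK (n : ℤ) (a : ℍ[ℤ,-1,0,-1]) :
    (@HSMul.hSMul ℤ ℍ[ℤ] ℍ[ℤ] _ n a).imK = n * a.imK := rfl
@[simp] lemma qlit_zsmul_imK (n : ℤ) (a : ℍ[ℤ,-1,0,-1]) :
    (@HSMul.hSMul ℤ ℍ[ℤ] ℍ[ℤ] (@instHSMul _ _ (@ZSMul.toSMul _ SubNegMonoid.toZSMul)) n a).imK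
      = n * a.imK := rfl
@[simp] lemma qlit_eq' (a : ℍ[ℤ,-1,0,-1]) (b : ℍ[ℤ]) :
    @Eq ℍ[ℤ] a b ↔ a.re = b.re ∧ a.imI = b.imI ∧ a.imJ = b.imJ ∧ a.imK = b.imK :=
  Quaternion.ext_iff (a := a) (b := b)
@[simp] lemma qlit_mul_re (a b : ℍ[ℤ,-1,0,-1]) : (@HMul.hMul ℍ[ℤ] ℍ[ℤ] ℍ[ℤ] _ a b).re
    = a.re * b.re - a.imI * b.imI - a.imJ * b.imJ - a.imK * b.imK := Quaternion.re_mul a b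
@[simp] lemma qlit_mul_imI (a b : ℍ[ℤ,-1,0,-1]) : (@HMul.hMul ℍ[ℤ] ℍ[ℤ] ℍ[ℤ] _ a b).imI
    = a.re * b.imI + a.imI * b.re + a.imJ * b.imK - a.imK * b.imJ := Quaternion.imI_mul a b
@[simp] lemma qlit_mul_imJ (a b : ℍ[ℤ,-1,0,-1]) : (@HMul.hMul ℍ[ℤ] ℍ[ℤ] ℍ[ℤ] _ a b).imJ
    = a.re * b.imJ - a.imI * b.imK + a.imJ * b.re + a.imK * b.imI := Quaternion.imJ_mul a b
@[simp] lemma qlit_mul_imK (a b : ℍ[ℤ,-1,0,-1]) : (@HMul.hMul ℍ[ℤ] ℍ[ℤ] ℍ[ℤ] _ a b).imK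
    = a.re * b.imK + a.imI * b.imJ - a.imJ * b.imI + a.imK * b.re := Quaternion.imK_mul a b
@[simp] lemma qlit_mulL_re (a : ℍ[ℤ,-1,0,-1]) (b : ℍ[ℤ]) : (@HMul.hMul ℍ[ℤ] ℍ[ℤ] ℍ[ℤ] _ a b).re
    = a.re * b.re - a.imI * b.imI - a.imJ * b.imJ - a.imK * b.imK := Quaternion.re_mul a b
@[simp] lemma qlit_mulL_imI (a : ℍ[ℤ,-1,0,-1]) (b : ℍ[ℤ]) : (@HMul.hMul ℍ[ℤ] ℍ[ℤ] ℍ[ℤ] _ a b).imI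
    = a.re * b.imI + a.imI * b.re + a.imJ * b.imK - a.imK * b.imJ := Quaternion.imI_mul a b
@[simp] lemma qlit_mulL_imJ (a : ℍ[ℤ,-1,0,-1]) (b : ℍ[ℤ]) : (@HMul.hMul ℍ[ℤ] ℍ[ℤ] ℍ[ℤ] _ a b).imJ
    = a.re * b.imJ - a.imI * b.imK + a.imJ * b.re + a.imK * b.imI := Quaternion.imJ_mul a b
@[simp] lemma qlit_mulL_imK (a : ℍ[ℤ,-1,0,-1]) (b : ℍ[ℤ]) : (@HMul.hMul ℍ[ℤ] ℍ[ℤ] ℍ[ℤ] _ a b).imK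
    = a.re * b.imK + a.imI * b.imJ - a.imJ * b.imI + a.imK * b.re := Quaternion.imK_mul a b
@[simp] lemma qlit_mulR_re (a : ℍ[ℤ]) (b : ℍ[ℤ,-1,0,-1]) : (@HMul.hMul ℍ[ℤ] ℍ[ℤ] ℍ[ℤ] _ a b).re
    = a.re * b.re - a.imI * b.imI - a.imJ * b.imJ - a.imK * b.imK := Quaternion.re_mul a b
@[simp] lemma qlit_mulR_imI (a : ℍ[ℤ]) (b : ℍ[ℤ,-1,0,-1]) : (@HMul.hMul ℍ[ℤ] ℍ[ℤ] ℍ[ℤ] _ a b).imI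
    = a.re * b.imI + a.imI * b.re + a.imJ * b.imK - a.imK * b.imJ := Quaternion.imI_mul a b
@[simp] lemma qlit_mulR_imJ (a : ℍ[ℤ]) (b : ℍ[ℤ,-1,0,-1]) : (@HMul.hMul ℍ[ℤ] ℍ[ℤ] ℍ[ℤ] _ a b).imJ
    = a.re * b.imJ - a.imI * b.imK + a.imJ * b.re + a.imK * b.imI := Quaternion.imJ_mul a b
@[simp] lemma qlit_mulR_imK (a : ℍ[ℤ]) (b : ℍ[ℤ,-1,0,-1]) : (@HMul.hMul ℍ[ℤ] ℍ[ℤ] ℍ[ℤ] _ a b).imK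
    = a.re * b.imK + a.imI * b.imJ - a.imJ * b.imI + a.imK * b.re := Quaternion.imK_mul a b


-- the linear map for a given choice of images of i,j,k
def fQ (u v w : ℍ[ℤ]) : (Fin (4 - 1) → ℤ) →ₗ[ℤ] ℍ[ℤ] where
  toFun x := x 0 • u + x 1 • v + x 2 • w
  map_add' x y := by simp [add_smul]; abel
  map_smul' c x := by simp [mul_smul, smul_add]

lemma hfQ (s : ℤ) (hs : s * s = 1) (x : Fin (4-1) → ℤ) :
    fQ ⟨0,1,0,0⟩ ⟨0,0,1,0⟩ ⟨0,0,0,s⟩ x * fQ ⟨0,1,0,0⟩ ⟨0,0,1,0⟩ ⟨0,0,0,s⟩ x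
      = algebraMap ℤ ℍ[ℤ] (Qf 4 x) := by
  rw [show Qf 4 x = -(x 0 * x 0 + x 1 * x 1 + x 2 * x 2) from by
    simp [Qf, QuadraticMap.weightedSumSquares_apply]
    rw [show (Finset.univ : Finset (Fin (4-1))) = {0,1,2} from rfl]
    simp; ring]
  ext <;> simp [fQ, Quaternion.ext_iff] <;> nlinarith [hs]

def piH : Cl 4 →ₐ[ℤ] ℍ[ℤ] :=
  CliffordAlgebra.lift (Qf 4) ⟨fQ ⟨0,1,0,0⟩ ⟨0,0,1,0⟩ ⟨0,0,0,1⟩, hfQ 1 rfl⟩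
def piH' : Cl 4 →ₐ[ℤ] ℍ[ℤ] :=
  CliffordAlgebra.lift (Qf 4) ⟨fQ ⟨0,1,0,0⟩ ⟨0,0,1,0⟩ ⟨0,0,0,(-1)⟩, hfQ (-1) rfl⟩

lemma piH_iGen0 : piH (iGen 4 0) = ⟨0,1,0,0⟩ := by
  rw [piH, iGen, CliffordAlgebra.lift_ι_apply]
  ext <;> simp [fQ, Pi.single_apply]
lemma piH_iGen1 : piH (iGen 4 1) = ⟨0,0,1,0⟩ := by
  rw [piH, iGen, CliffordAlgebra.lift_ι_apply]
  ext <;> simp [fQ, Pi.single_apply]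
lemma piH_iGen2 : piH (iGen 4 2) = ⟨0,0,0,1⟩ := by
  rw [piH, iGen, CliffordAlgebra.lift_ι_apply]
  ext <;> simp [fQ, Pi.single_apply]
lemma piH'_iGen0 : piH' (iGen 4 0) = ⟨0,1,0,0⟩ := by
  rw [piH', iGen, CliffordAlgebra.lift_ι_apply]
  ext <;> simp [fQ, Pi.single_apply]
lemma piH'_iGen1 : piH' (iGen 4 1) = ⟨0,0,1,0⟩ := by
  rw [piH', iGen, CliffordAlgebra.lift_ι_apply]
  ext <;> simp [fQ, Pi.single_apply]
lemma piH'_iGen2 : piH' (iGen 4 2) = ⟨0,0,0,-1⟩ := by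
  rw [piH', iGen, CliffordAlgebra.lift_ι_apply]
  ext <;> simp [fQ, Pi.single_apply]

lemma iGen_swap {h k : Fin (4-1)} (hne : h ≠ k) :
    iGen 4 k * iGen 4 h = -(iGen 4 h * iGen 4 k) := by
  have horth : (Qf 4).IsOrtho (Pi.single k 1) (Pi.single h 1) := by
    rw [QuadraticMap.isOrtho_def]
    fin_cases h <;> fin_cases k <;> first
      | exact absurd rfl hne
      | (norm_num [Qf, QuadraticMap.weightedSumSquares_apply]
         rw [show (Finset.univ : Finset (Fin (4-1))) = {0,1,2} from rfl]
         norm_num [Pi.single_apply]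
         decide)
  exact CliffordAlgebra.ι_mul_ι_comm_of_isOrtho horth

def gA : Cl 4 := iGen 4 0
def gB : Cl 4 := iGen 4 1
def gC : Cl 4 := iGen 4 2

@[simp] lemma sqA : gA * gA = -1 := iGen_sq 4 0
@[simp] lemma sqB : gB * gB = -1 := iGen_sq 4 1
@[simp] lemma sqC : gC * gC = -1 := iGen_sq 4 2
@[simp] lemma sqA' (x : Cl 4) : gA * (gA * x) = -x := by
  rw [← mul_assoc, sqA, neg_one_mul]
@[simp] lemma sqB' (x : Cl 4) : gB * (gB * x) = -x := by
  rw [← mul_assoc, sqB, neg_one_mul]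
@[simp] lemma sqC' (x : Cl 4) : gC * (gC * x) = -x := by
  rw [← mul_assoc, sqC, neg_one_mul]
@[simp] lemma swapBA : gB * gA = -(gA * gB) := iGen_swap (by decide)
@[simp] lemma swapCA : gC * gA = -(gA * gC) := iGen_swap (by decide)
@[simp] lemma swapCB : gC * gB = -(gB * gC) := iGen_swap (by decide)
@[simp] lemma swapBA' (x : Cl 4) : gB * (gA * x) = -(gA * (gB * x)) := by
  rw [← mul_assoc, swapBA, neg_mul, mul_assoc]
@[simp] lemma swapCA' (x : Cl 4) : gC * (gA * x) = -(gA * (gC * x)) := by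
  rw [← mul_assoc, swapCA, neg_mul, mul_assoc]
@[simp] lemma swapCB' (x : Cl 4) : gC * (gB * x) = -(gB * (gC * x)) := by
  rw [← mul_assoc, swapCB, neg_mul, mul_assoc]

def mBase : Fin 8 → Cl 4 := ![1, gA, gB, gC, gA*gB, gA*gC, gB*gC, gA*(gB*gC)]

def TSpan : Submodule ℤ (Cl 4) := Submodule.span ℤ (Set.range mBase)

lemma memT (j : Fin 8) : mBase j ∈ TSpan := Submodule.subset_span ⟨j, rfl⟩


@[simp] lemma mBase0 : mBase 0 = 1 := rfl
@[simp] lemma mBase1 : mBase 1 = gA := rfl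
@[simp] lemma mBase2 : mBase 2 = gB := rfl
@[simp] lemma mBase3 : mBase 3 = gC := rfl
@[simp] lemma mBase4 : mBase 4 = gA*gB := rfl
@[simp] lemma mBase5 : mBase 5 = gA*gC := rfl
@[simp] lemma mBase6 : mBase 6 = gB*gC := rfl
@[simp] lemma mBase7 : mBase 7 = gA*(gB*gC) := rfl

lemma memT' :
    (1:Cl 4) ∈ TSpan ∧ gA ∈ TSpan ∧ gB ∈ TSpan ∧ gC ∈ TSpan ∧ gA*gB ∈ TSpan ∧
      gA*gC ∈ TSpan ∧ gB*gC ∈ TSpan ∧ gA*(gB*gC) ∈ TSpan :=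
  ⟨memT 0, memT 1, memT 2, memT 3, memT 4, memT 5, memT 6, memT 7⟩

lemma gAMulT (j : Fin 8) : gA * mBase j ∈ TSpan := by
  obtain ⟨t0, t1, t2, t3, t4, t5, t6, t7⟩ := memT'
  fin_cases j <;> simp [mul_assoc] <;>
    first
      | assumption
      | exact TSpan.neg_mem (by assumption)
      | exact TSpan.neg_mem t0

lemma gBMulT (j : Fin 8) : gB * mBase j ∈ TSpan := by
  obtain ⟨t0, t1, t2, t3, t4, t5, t6, t7⟩ := memT'
  fin_cases j <;> simp [mul_assoc] <;>
    first
      | assumption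
      | exact TSpan.neg_mem (by assumption)
      | exact TSpan.neg_mem t0

lemma gCMulT (j : Fin 8) : gC * mBase j ∈ TSpan := by
  obtain ⟨t0, t1, t2, t3, t4, t5, t6, t7⟩ := memT'
  fin_cases j <;> simp [mul_assoc] <;>
    first
      | assumption
      | exact TSpan.neg_mem (by assumption)
      | exact TSpan.neg_mem t0

lemma genMulT (h : Fin (4-1)) (j : Fin 8) : iGen 4 h * mBase j ∈ TSpan := by
  fin_cases h
  · exact gAMulT j
  · exact gBMulT j
  · exact gCMulT j

lemma genMulT' (h : Fin (4-1)) : ∀ y ∈ TSpan, iGen 4 h * y ∈ TSpan := by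
  intro y hy
  induction hy using Submodule.span_induction with
  | mem x hxm => obtain ⟨j, rfl⟩ := hxm; exact genMulT h j
  | zero => simpa using TSpan.zero_mem
  | add a b _ _ ha hb => rw [mul_add]; exact TSpan.add_mem ha hb
  | smul c a _ ha => rw [mul_smul_comm]; exact TSpan.smul_mem c ha

lemma mulT : ∀ x ∈ TSpan, ∀ y ∈ TSpan, x * y ∈ TSpan := by
  intro x hx
  induction hx using Submodule.span_induction with
  | mem x hxm =>
    obtain ⟨j, rfl⟩ := hxm
    intro y hy
    have hA : ∀ y ∈ TSpan, gA * y ∈ TSpan := genMulT' 0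
    have hB : ∀ y ∈ TSpan, gB * y ∈ TSpan := genMulT' 1
    have hC : ∀ y ∈ TSpan, gC * y ∈ TSpan := genMulT' 2
    fin_cases j
    · show (1:Cl 4) * y ∈ TSpan
      rw [one_mul]; exact hy
    · exact hA y hy
    · exact hB y hy
    · exact hC y hy
    · show gA*gB * y ∈ TSpan
      rw [mul_assoc]; exact hA _ (hB y hy)
    · show gA*gC * y ∈ TSpan
      rw [mul_assoc]; exact hA _ (hC y hy)
    · show gB*gC * y ∈ TSpan
      rw [mul_assoc]; exact hB _ (hC y hy)
    · show gA*(gB*gC) * y ∈ TSpan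
      rw [mul_assoc, mul_assoc]
      exact hA _ (hB _ (hC y hy))
  | zero => intro y hy; simpa using TSpan.zero_mem
  | add a b _ _ ha hb => intro y hy; rw [add_mul]; exact TSpan.add_mem (ha y hy) (hb y hy)
  | smul c a _ ha => intro y hy; rw [smul_mul_assoc]; exact TSpan.smul_mem c (ha y hy)

lemma mem_TSpan (x : Cl 4) : x ∈ TSpan := by
  induction x using CliffordAlgebra.induction with
  | algebraMap r =>
    have : (algebraMap ℤ (Cl 4)) r = r • 1 := by
      rw [Algebra.algebraMap_eq_smul_one]
    rw [this]
    exact TSpan.smul_mem r (memT 0)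
  | ι v =>
    have hv : v = v 0 • Pi.single 0 1 + v 1 • Pi.single 1 1 + v 2 • Pi.single 2 1 := by
      funext i; fin_cases i <;> simp [Pi.single_apply]
    rw [hv, map_add, map_add, LinearMap.map_smul, LinearMap.map_smul, LinearMap.map_smul]
    exact TSpan.add_mem (TSpan.add_mem
      (TSpan.smul_mem _ (memT 1)) (TSpan.smul_mem _ (memT 2))) (TSpan.smul_mem _ (memT 3))
  | mul a b ha hb => exact mulT a ha b hb
  | add a b ha hb => exact TSpan.add_mem ha hb

lemma exists_rep (x : Cl 4) : ∃ c : Fin 8 → ℤ, x = ∑ i, c i • mBase i := by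
  have h := mem_TSpan x
  rw [TSpan, Submodule.mem_span_range_iff_exists_fun] at h
  obtain ⟨c, hc⟩ := h
  exact ⟨c, hc.symm⟩

lemma pi_inj (x : Cl 4) (h1 : piH x = 0) (h2 : piH' x = 0) : x = 0 := by
  obtain ⟨c, rfl⟩ := exists_rep x
  rw [map_sum] at h1 h2
  simp only [Fin.sum_univ_eight, mBase0, mBase1, mBase2, mBase3, mBase4, mBase5, mBase6,
    mBase7, map_zsmul, map_mul, map_one, piH_iGen0, piH_iGen1, piH_iGen2,
    show piH gA = ⟨0,1,0,0⟩ from piH_iGen0, show piH gB = ⟨0,0,1,0⟩ from piH_iGen1,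
    show piH gC = ⟨0,0,0,1⟩ from piH_iGen2,
    show piH' gA = ⟨0,1,0,0⟩ from piH'_iGen0, show piH' gB = ⟨0,0,1,0⟩ from piH'_iGen1,
    show piH' gC = ⟨0,0,0,-1⟩ from piH'_iGen2] at h1 h2
  rw [Quaternion.ext_iff] at h1 h2
  simp [Quaternion.re_mul, Quaternion.imI_mul, Quaternion.imJ_mul, Quaternion.imK_mul] at h1 h2
  obtain ⟨a1, a2, a3, a4⟩ := h1
  obtain ⟨b1, b2, b3, b4⟩ := h2
  have hz : c 0 = 0 ∧ c 1 = 0 ∧ c 2 = 0 ∧ c 3 = 0 ∧ c 4 = 0 ∧ c 5 = 0 ∧ c 6 = 0 ∧ c 7 = 0 := by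
    refine ⟨?_,?_,?_,?_,?_,?_,?_,?_⟩ <;> omega
  obtain ⟨z0,z1,z2,z3,z4,z5,z6,z7⟩ := hz
  rw [Fin.sum_univ_eight, z0, z1, z2, z3, z4, z5, z6, z7]
  simp

def sigmaQ (q : ℍ[ℤ]) : ℍ[ℤ] := ⟨q.re, q.imI, q.imJ, -q.imK⟩

@[simp] lemma sigmaQ_zero : sigmaQ 0 = 0 := by simp [sigmaQ, Quaternion.ext_iff]
@[simp] lemma sigmaQ_one : sigmaQ 1 = 1 := by simp [sigmaQ, Quaternion.ext_iff]
@[simp] lemma sigmaQ_neg (q) : sigmaQ (-q) = -sigmaQ q := by simp [sigmaQ, Quaternion.ext_iff]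
lemma sigmaQ_add (p q) : sigmaQ (p + q) = sigmaQ p + sigmaQ q := by
  simp [sigmaQ, Quaternion.ext_iff, add_comm]
lemma sigmaQ_mul (p q) : sigmaQ (p * q) = sigmaQ q * sigmaQ p := by
  simp [sigmaQ, Quaternion.ext_iff, Quaternion.re_mul, Quaternion.imI_mul,
    Quaternion.imJ_mul, Quaternion.imK_mul]
  refine ⟨by ring, by ring, by ring, by ring⟩
lemma sigmaQ_smul (c : ℤ) (q) : sigmaQ (c • q) = c • sigmaQ q := by
  simp [sigmaQ, Quaternion.ext_iff]

abbrev MQ := Matrix (Fin 2) (Fin 2) ℍ[ℤ]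

def tauM (M : MQ) : MQ := (M.map sigmaQ).transpose

lemma tauM_one : tauM 1 = 1 := by
  refine Matrix.ext fun i j => ?_
  fin_cases i <;> fin_cases j <;>
    simp [tauM, Matrix.transpose_apply, Matrix.map_apply, Matrix.one_apply]

lemma tauM_mul (A B : MQ) : tauM (A * B) = tauM B * tauM A := by
  refine Matrix.ext fun i j => ?_
  simp [tauM, Matrix.transpose_apply, Matrix.map_apply, Matrix.mul_apply, Fin.sum_univ_two,
    sigmaQ_add, sigmaQ_mul]

def wM : MQ := !![0, 1; -1, 0]
def wM' : MQ := !![0, -1; 1, 0]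

lemma wM_mul_wM' : wM * wM' = 1 := by
  refine Matrix.ext fun i j => ?_
  fin_cases i <;> fin_cases j <;> simp [wM, wM', Matrix.mul_apply, Fin.sum_univ_two,
    Matrix.one_apply]

lemma wM'_mul_wM : wM' * wM = 1 := by
  refine Matrix.ext fun i j => ?_
  fin_cases i <;> fin_cases j <;> simp [wM, wM', Matrix.mul_apply, Fin.sum_univ_two,
    Matrix.one_apply]

lemma conjw_mul (X Y : MQ) : (wM*X*wM')*(wM*Y*wM') = wM*(X*Y)*wM' := by
  calc (wM*X*wM')*(wM*Y*wM') = wM*X*((wM'*wM)*(Y*wM')) := by simp only [mul_assoc]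
  _ = wM*(X*Y)*wM' := by rw [wM'_mul_wM, one_mul]; simp only [mul_assoc]

def phiU : MQˣ →* MQˣ where
  toFun u :=
    { val := wM * tauM (u⁻¹).val * wM'
      inv := wM * tauM u.val * wM'
      val_inv := by
        rw [conjw_mul, ← tauM_mul, Units.mul_inv, tauM_one, mul_one, wM_mul_wM']
      inv_val := by
        rw [conjw_mul, ← tauM_mul, Units.inv_mul, tauM_one, mul_one, wM_mul_wM'] }
  map_one' := by
    refine Units.ext ?_
    show wM * tauM ((1 : MQˣ)⁻¹).val * wM' = 1
    rw [inv_one, Units.val_one, tauM_one, mul_one, wM_mul_wM']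
  map_mul' u v := by
    refine Units.ext ?_
    show wM * tauM ((u*v)⁻¹).val * wM'
        = (wM * tauM (u⁻¹).val * wM') * (wM * tauM (v⁻¹).val * wM')
    rw [conjw_mul, ← tauM_mul, mul_inv_rev, Units.val_mul]

def piM : Matrix (Fin 2) (Fin 2) (Cl 4) →+* MQ := (piH.toRingHom).mapMatrix
def piM' : Matrix (Fin 2) (Fin 2) (Cl 4) →+* MQ := (piH'.toRingHom).mapMatrix

def alphaU : (Matrix (Fin 2) (Fin 2) (Cl 4))ˣ →* MQˣ := Units.map piM.toMonoidHom
def alphaU' : (Matrix (Fin 2) (Fin 2) (Cl 4))ˣ →* MQˣ := Units.map piM'.toMonoidHom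

lemma alphaU_Eu (x : Cl 4) : alphaU (Eu 4 x) = Em ℍ[ℤ] (piH x) := by
  refine Units.ext ?_
  show piM (Eu 4 x).val = (Em ℍ[ℤ] (piH x)).val
  refine Matrix.ext fun i j => ?_
  fin_cases i <;> fin_cases j <;>
    simp [piM, Eu, Em, RingHom.mapMatrix_apply, Matrix.map_apply]

lemma alphaU'_Eu (x : Cl 4) : alphaU' (Eu 4 x) = Em ℍ[ℤ] (piH' x) := by
  refine Units.ext ?_
  show piM' (Eu 4 x).val = (Em ℍ[ℤ] (piH' x)).val
  refine Matrix.ext fun i j => ?_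
  fin_cases i <;> fin_cases j <;>
    simp [piM', Eu, Em, RingHom.mapMatrix_apply, Matrix.map_apply]

lemma phiU_Em (q : ℍ[ℤ]) : phiU (Em ℍ[ℤ] q) = Em ℍ[ℤ] (sigmaQ q) := by
  refine Units.ext ?_
  show wM * tauM ((Em ℍ[ℤ] q)⁻¹).val * wM' = (Em ℍ[ℤ] (sigmaQ q)).val
  have : ((Em ℍ[ℤ] q)⁻¹).val = !![0, -1; 1, q] := rfl
  rw [this]
  refine Matrix.ext fun i j => ?_
  fin_cases i <;> fin_cases j <;>
    simp [wM, wM', tauM, Em, Matrix.mul_apply, Matrix.vecMul, dotProduct,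
      Fin.sum_univ_two, Matrix.transpose_apply, Matrix.map_apply]

lemma sigma_piH {x : Cl 4} (hx : x ∈ Vn 4) : sigmaQ (piH x) = piH' x := by
  induction hx using Submodule.span_induction with
  | mem y hy =>
    rcases hy with rfl | ⟨h, rfl⟩
    · simp [map_one]
    · fin_cases h
      · rw [show iGen 4 ⟨0, by omega⟩ = iGen 4 0 from rfl, piH_iGen0, piH'_iGen0]
        simp [sigmaQ]
      · rw [show iGen 4 ⟨1, by omega⟩ = iGen 4 1 from rfl, piH_iGen1, piH'_iGen1]
        simp [sigmaQ]
      · rw [show iGen 4 ⟨2, by omega⟩ = iGen 4 2 from rfl, piH_iGen2, piH'_iGen2]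
        simp [sigmaQ, Quaternion.ext_iff]
  | zero => simp [map_zero]
  | add a b _ _ ha hb => rw [map_add, map_add, sigmaQ_add, ha, hb]
  | smul c a _ ha => rw [map_zsmul, map_zsmul, sigmaQ_smul, ha]

lemma piH_lift (q : ℍ[ℤ]) : ∃ x ∈ Vn 4, piH x = q := by
  refine ⟨q.re • (1 : Cl 4) + q.imI • gA + q.imJ • gB + q.imK • gC, ?_, ?_⟩
  · have h1 : (1 : Cl 4) ∈ Vn 4 := Submodule.subset_span (Set.mem_insert _ _)
    have hA : gA ∈ Vn 4 := Submodule.subset_span (Set.mem_insert_of_mem _ ⟨0, rfl⟩)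
    have hB : gB ∈ Vn 4 := Submodule.subset_span (Set.mem_insert_of_mem _ ⟨1, rfl⟩)
    have hC : gC ∈ Vn 4 := Submodule.subset_span (Set.mem_insert_of_mem _ ⟨2, rfl⟩)
    exact add_mem (add_mem (add_mem ((Vn 4).smul_mem _ h1) ((Vn 4).smul_mem _ hA))
      ((Vn 4).smul_mem _ hB)) ((Vn 4).smul_mem _ hC)
  · rw [map_add, map_add, map_add, map_zsmul, map_zsmul, map_zsmul, map_zsmul, map_one,
      show piH gA = ⟨0,1,0,0⟩ from piH_iGen0, show piH gB = ⟨0,0,1,0⟩ from piH_iGen1,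
      show piH gC = ⟨0,0,0,1⟩ from piH_iGen2]
    ext <;> simp

lemma alpha_mem : ∀ u ∈ E2Gamma 4, alphaU u ∈ E2 ℍ[ℤ] := by
  intro u hu
  induction hu using Subgroup.closure_induction with
  | mem y hy =>
    obtain ⟨x, hx, rfl⟩ := hy
    rw [alphaU_Eu]
    exact Subgroup.subset_closure ⟨piH x, rfl⟩
  | one => rw [map_one]; exact one_mem _
  | mul a b _ _ ha hb => rw [map_mul]; exact mul_mem ha hb
  | inv a _ ha => rw [map_inv]; exact inv_mem ha

lemma E2_le_map : E2 ℍ[ℤ] ≤ Subgroup.map alphaU (E2Gamma 4) := by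
  rw [E2]
  refine Subgroup.closure_le _ |>.mpr ?_
  rintro v ⟨q, rfl⟩
  obtain ⟨x, hx, hpx⟩ := piH_lift q
  refine ⟨Eu 4 x, Subgroup.subset_closure ⟨x, hx, rfl⟩, ?_⟩
  rw [alphaU_Eu, hpx]

lemma agree : ∀ u ∈ E2Gamma 4, phiU (alphaU u) = alphaU' u := by
  intro u hu
  induction hu using Subgroup.closure_induction with
  | mem y hy =>
    obtain ⟨x, hx, rfl⟩ := hy
    rw [alphaU_Eu, alphaU'_Eu, phiU_Em, sigma_piH hx]
  | one => rw [map_one, map_one, map_one]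
  | mul a b _ _ ha hb => rw [map_mul, map_mul, map_mul, ha, hb]
  | inv a _ ha => rw [map_inv, map_inv, map_inv, ha]

lemma alpha_inj_on : ∀ u ∈ E2Gamma 4, alphaU u = 1 → u = 1 := by
  intro u hu h1
  have h2 : alphaU' u = 1 := by rw [← agree u hu, h1, map_one]
  have h1v : piM u.val = 1 := congrArg Units.val h1
  have h2v : piM' u.val = 1 := congrArg Units.val h2
  have h1z : piM (u.val - 1) = 0 := by rw [map_sub, h1v, map_one, sub_self]
  have h2z : piM' (u.val - 1) = 0 := by rw [map_sub, h2v, map_one, sub_self]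
  have hz : u.val - 1 = 0 := by
    refine Matrix.ext fun i j => ?_
    refine pi_inj _ ?_ ?_
    · have := congrFun (congrFun h1z i) j
      simpa [piM, RingHom.mapMatrix_apply, Matrix.map_apply] using this
    · have := congrFun (congrFun h2z i) j
      simpa [piM', RingHom.mapMatrix_apply, Matrix.map_apply] using this
  exact Units.ext (by rwa [sub_eq_zero] at hz)

set_option maxHeartbeats 2000000 in
def fIso : ↥(E2Gamma 4) →* ↥(E2 ℍ[ℤ]) where
  toFun u := ⟨alphaU u.1, alpha_mem u.1 u.2⟩
  map_one' := Subtype.ext (by simp)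
  map_mul' u v := Subtype.ext (by simp)

lemma L1 (u : ↥(E2Gamma 4)) (h : fIso u = 1) : alphaU u.1 = 1 := congrArg Subtype.val h

lemma L2 (u : ↥(E2Gamma 4)) (h : fIso u = 1) : u = 1 :=
  Subtype.ext (alpha_inj_on u.1 u.2 (L1 u h))

lemma L3 : Function.Injective fIso := by
  rw [injective_iff_map_eq_one]
  exact L2

lemma L4 : Function.Surjective fIso := by
  rintro ⟨v, hv⟩
  obtain ⟨u, hu, huv⟩ := E2_le_map hv
  exact ⟨⟨u, hu⟩, Subtype.ext huv⟩


/-- `E₂(Γ₄(ℤ))` is isomorphic to `E₂(ℒ)`, where `ℒ` is the ring of Lipschitz quaternions. -/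
theorem E2Gamma_four_iso_E2_lipschitz :
    Nonempty (↥(E2Gamma 4) ≃* ↥(E2 (Quaternion ℤ))) :=
  ⟨MulEquiv.ofBijective fIso ⟨L3, L4⟩⟩
end
end

section
/- The ring ℒ of Lipschitz quaternions is a GE₂-ring: the subgroup GE₂(ℒ) of the unit group of M₂(ℒ) generated by the matrices E(x) for x ∈ ℒ together with all diagonal matrices diag(μ, ν) with μ, ν ∈ ℒˣ is the whole unit group of M₂(ℒ). -/
noncomputable section

/-- The group `GE₂(R)`, generated by `E₂(R)` together with all invertible diagonal
matrices `diag(μ, ν)` with `μ, ν ∈ Rˣ`. -/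
def GE2 (R : Type*) [Ring R] : Subgroup (Matrix (Fin 2) (Fin 2) R)ˣ :=
  Subgroup.closure (Set.range (Em R) ∪
    {u : (Matrix (Fin 2) (Fin 2) R)ˣ | ∃ μ ν : Rˣ,
      u.val = !![(μ : R), 0; 0, (ν : R)]})


namespace GE2Proof

open Quaternion

variable {R : Type*} [Ring R]

lemma Em_mem (x : R) : Em R x ∈ GE2 R :=
  Subgroup.subset_closure (Or.inl ⟨x, rfl⟩)

/-- lower unitriangular -/
def Lm (p : R) : (Matrix (Fin 2) (Fin 2) R)ˣ := (Em R 0) ^ 3 * Em R p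

lemma Lm_mem (p : R) : Lm p ∈ GE2 R := mul_mem (pow_mem (Em_mem 0) 3) (Em_mem p)

lemma Lm_val (p : R) : (Lm p).val = !![1, 0; p, 1] := by
  show ((Em R 0).val ^ 3 * (Em R p).val) = _
  ext i j
  fin_cases i <;> fin_cases j <;>
    simp [Em, pow_succ, Matrix.mul_apply, Fin.sum_univ_two]

/-- upper unitriangular -/
def Um (x : R) : (Matrix (Fin 2) (Fin 2) R)ˣ := (Em R 0) ^ 2 * Em R (-x) * Em R 0

lemma Um_mem (x : R) : Um x ∈ GE2 R :=
  mul_mem (mul_mem (pow_mem (Em_mem 0) 2) (Em_mem (-x))) (Em_mem 0)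

lemma Um_val (x : R) : (Um x).val = !![1, x; 0, 1] := by
  show ((Em R 0).val ^ 2 * (Em R (-x)).val * (Em R 0).val) = _
  ext i j
  fin_cases i <;> fin_cases j <;>
    simp [Em, pow_succ, Matrix.mul_apply, Fin.sum_univ_two]

/-- diagonal unit -/
def Dm (μ ν : Rˣ) : (Matrix (Fin 2) (Fin 2) R)ˣ where
  val := !![(μ : R), 0; 0, (ν : R)]
  inv := !![((μ⁻¹ : Rˣ) : R), 0; 0, ((ν⁻¹ : Rˣ) : R)]
  val_inv := by
    ext i j
    fin_cases i <;> fin_cases j <;>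
      simp [Matrix.mul_apply, Fin.sum_univ_two, Matrix.one_apply]
  inv_val := by
    ext i j
    fin_cases i <;> fin_cases j <;>
      simp [Matrix.mul_apply, Fin.sum_univ_two, Matrix.one_apply]

lemma Dm_mem (μ ν : Rˣ) : Dm μ ν ∈ GE2 R :=
  Subgroup.subset_closure (Or.inr ⟨μ, ν, rfl⟩)

lemma entry_mul {S : Type*} [Ring S] (A B : Matrix (Fin 2) (Fin 2) S) (i j : Fin 2) :
    (A * B) i j = A i 0 * B 0 j + A i 1 * B 1 j := by
  rw [Matrix.mul_apply, Fin.sum_univ_two]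

variable {S : Type*} [Ring S] [NoZeroDivisors S] [Nontrivial S]

lemma tri (v : (Matrix (Fin 2) (Fin 2) S)ˣ) (h : v.val 1 0 = 0) : v ∈ GE2 S := by
  have key : ∀ (i j : Fin 2), (v.val * v.inv) i j = (1 : Matrix (Fin 2) (Fin 2) S) i j := by
    intro i j; rw [v.val_inv]
  have key' : ∀ (i j : Fin 2), (v.inv * v.val) i j = (1 : Matrix (Fin 2) (Fin 2) S) i j := by
    intro i j; rw [v.inv_val]
  have e11 : v.val 1 1 * v.inv 1 1 = 1 := by
    have h1 := key 1 1
    rwa [entry_mul, Matrix.one_apply_eq, h, zero_mul, zero_add] at h1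
  have e10 : v.val 1 1 * v.inv 1 0 = 0 := by
    have h1 := key 1 0
    rwa [entry_mul, Matrix.one_apply_ne (by decide), h, zero_mul, zero_add] at h1
  have e00 : v.val 0 0 * v.inv 0 0 + v.val 0 1 * v.inv 1 0 = 1 := by
    have h1 := key 0 0
    rwa [entry_mul, Matrix.one_apply_eq] at h1
  have f00 : v.inv 0 0 * v.val 0 0 = 1 := by
    have h1 := key' 0 0
    rwa [entry_mul, Matrix.one_apply_eq, h, mul_zero, add_zero] at h1
  have f11 : v.inv 1 0 * v.val 0 1 + v.inv 1 1 * v.val 1 1 = 1 := by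
    have h1 := key' 1 1
    rwa [entry_mul, Matrix.one_apply_eq] at h1
  have hd0 : v.val 1 1 ≠ 0 := by
    intro h'
    rw [h', zero_mul] at e11
    exact one_ne_zero e11.symm
  have hw10 : v.inv 1 0 = 0 := by
    rcases mul_eq_zero.mp e10 with h' | h'
    · exact absurd h' hd0
    · exact h'
  have e00' : v.val 0 0 * v.inv 0 0 = 1 := by rwa [hw10, mul_zero, add_zero] at e00
  have f11' : v.inv 1 1 * v.val 1 1 = 1 := by rwa [hw10, zero_mul, zero_add] at f11
  set μ : Sˣ := ⟨v.val 0 0, v.inv 0 0, e00', f00⟩ with hμ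
  set ν : Sˣ := ⟨v.val 1 1, v.inv 1 1, e11, f11'⟩ with hν
  have hx : v.val 0 0 * (v.inv 0 0 * v.val 0 1) = v.val 0 1 := by
    rw [← mul_assoc, e00', one_mul]
  have hprod : (!![v.val 0 0, 0; 0, v.val 1 1] : Matrix (Fin 2) (Fin 2) S) *
      !![1, v.inv 0 0 * v.val 0 1; 0, 1] =
      !![v.val 0 0, v.val 0 1; v.val 1 0, v.val 1 1] := by
    rw [Matrix.mul_fin_two, h]
    simp only [mul_one, mul_zero, zero_mul, add_zero, zero_add, hx]
  have hv : v = Dm μ ν * Um (v.inv 0 0 * v.val 0 1) := by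
    apply Units.ext
    show v.val = (Dm μ ν).val * (Um (v.inv 0 0 * v.val 0 1)).val
    have hDval : (Dm μ ν).val = !![v.val 0 0, 0; 0, v.val 1 1] := rfl
    rw [Um_val, hDval, hprod]
    exact Matrix.eta_fin_two v.val
  rw [hv]
  exact mul_mem (Dm_mem μ ν) (Um_mem _)

def phi : Quaternion ℤ →+* Quaternion ℚ where
  toFun x := ⟨(x.re : ℚ), (x.imI : ℚ), (x.imJ : ℚ), (x.imK : ℚ)⟩
  map_one' := by ext <;> simp
  map_mul' x y := by
    ext <;> simp [Quaternion.re_mul, Quaternion.imI_mul, Quaternion.imJ_mul,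
      Quaternion.imK_mul]
    · erw [Quaternion.re_mul]
    · erw [Quaternion.imI_mul]
    · erw [Quaternion.imJ_mul]
    · erw [Quaternion.imK_mul]
  map_zero' := by ext <;> simp
  map_add' x y := by
    ext <;> push_cast <;> simp
    · erw [Quaternion.re_add]
    · erw [Quaternion.imI_add]
    · erw [Quaternion.imJ_add]
    · erw [Quaternion.imK_add]

@[simp] lemma phi_re (x : Quaternion ℤ) : (phi x).re = (x.re : ℚ) := rfl
@[simp] lemma phi_imI (x : Quaternion ℤ) : (phi x).imI = (x.imI : ℚ) := rfl
@[simp] lemma phi_imJ (x : Quaternion ℤ) : (phi x).imJ = (x.imJ : ℚ) := rfl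
@[simp] lemma phi_imK (x : Quaternion ℤ) : (phi x).imK = (x.imK : ℚ) := rfl

lemma phi_inj : Function.Injective phi := by
  intro x y h
  have h1 := congrArg QuaternionAlgebra.re h
  have h2 := congrArg QuaternionAlgebra.imI h
  have h3 := congrArg QuaternionAlgebra.imJ h
  have h4 := congrArg QuaternionAlgebra.imK h
  rw [phi_re x, phi_re y] at h1
  rw [phi_imI x, phi_imI y] at h2
  rw [phi_imJ x, phi_imJ y] at h3
  rw [phi_imK x, phi_imK y] at h4
  ext
  · exact_mod_cast h1
  · exact_mod_cast h2
  · exact_mod_cast h3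
  · exact_mod_cast h4
  
lemma normSq_phi (x : Quaternion ℤ) : normSq (phi x) = ((normSq x : ℤ) : ℚ) := by
  simp only [Quaternion.normSq_def', phi_re, phi_imI, phi_imJ, phi_imK]
  push_cast
  ring


lemma isUnit_of_normSq_eq_one {d : Quaternion ℤ} (h : normSq d = 1) : IsUnit d := by
  refine ⟨⟨d, star d, ?_, ?_⟩, rfl⟩
  · rw [Quaternion.self_mul_star, h]; simp
  · rw [Quaternion.star_mul_self, h]; simp

lemma sq_quarter {t : ℚ} (ht : t ^ 2 = 1 / 4) : ∃ n : ℤ, (n : ℚ) = 2 * t := by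
  have h0 : (t - 1 / 2) * (t + 1 / 2) = 0 := by nlinarith
  rcases mul_eq_zero.mp h0 with h | h
  · exact ⟨1, by push_cast; linarith⟩
  · exact ⟨-1, by push_cast; linarith⟩

lemma expand_lemma {A : Type*} [Ring A] (D Q X Y W : A) :
    D * ((1 + 1) * (Q * X + Y) + ((W - Q) + (W - Q)) * X)
      = D * W * X + D * Y + (D * W * X + D * Y) := by
  noncomm_ring

set_option maxHeartbeats 1000000 in
lemma euclid (c d : Quaternion ℤ) (hd : d ≠ 0)
    (hcd : ∃ x y : Quaternion ℤ, c * x + d * y = 1) :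
    (∃ q : Quaternion ℤ, normSq (c - d * q) < normSq d) ∨ normSq d = 1 := by
  have hφd : phi d ≠ 0 := fun h => hd (phi_inj (by rwa [map_zero]))
  set w : Quaternion ℚ := (phi d)⁻¹ * phi c with hw
  set q : Quaternion ℤ := ⟨round w.re, round w.imI, round w.imJ, round w.imK⟩ with hq
  set s : Quaternion ℚ := w - phi q with hs
  clear_value w
  clear_value q
  have hsre : |s.re| ≤ 1 / 2 := by
    have h := abs_sub_round w.re
    have : s.re = w.re - ((round w.re : ℤ) : ℚ) := by
      rw [hs, Quaternion.re_sub, hq]; rfl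
    rwa [← this] at h
  have hsimI : |s.imI| ≤ 1 / 2 := by
    have h := abs_sub_round w.imI
    have : s.imI = w.imI - ((round w.imI : ℤ) : ℚ) := by
      rw [hs, Quaternion.imI_sub, hq]; rfl
    rwa [← this] at h
  have hsimJ : |s.imJ| ≤ 1 / 2 := by
    have h := abs_sub_round w.imJ
    have : s.imJ = w.imJ - ((round w.imJ : ℤ) : ℚ) := by
      rw [hs, Quaternion.imJ_sub, hq]; rfl
    rwa [← this] at h
  have hsimK : |s.imK| ≤ 1 / 2 := by
    have h := abs_sub_round w.imK
    have : s.imK = w.imK - ((round w.imK : ℤ) : ℚ) := by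
      rw [hs, Quaternion.imK_sub, hq]; rfl
    rwa [← this] at h
  have hnsq : normSq s = s.re ^ 2 + s.imI ^ 2 + s.imJ ^ 2 + s.imK ^ 2 :=
    Quaternion.normSq_def' s
  have b1 : s.re ^ 2 ≤ 1 / 4 := by nlinarith [sq_abs s.re, abs_nonneg s.re]
  have b2 : s.imI ^ 2 ≤ 1 / 4 := by nlinarith [sq_abs s.imI, abs_nonneg s.imI]
  have b3 : s.imJ ^ 2 ≤ 1 / 4 := by nlinarith [sq_abs s.imJ, abs_nonneg s.imJ]
  have b4 : s.imK ^ 2 ≤ 1 / 4 := by nlinarith [sq_abs s.imK, abs_nonneg s.imK]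
  have hle : normSq s ≤ 1 := by rw [hnsq]; linarith
  have hcw : phi d * w = phi c := by
    rw [hw, ← mul_assoc, mul_inv_cancel₀ hφd, one_mul]
  by_cases hlt : normSq s < 1
  · left
    refine ⟨q, ?_⟩
    have hceq : phi (c - d * q) = phi d * s := by
      rw [map_sub, map_mul, hs, mul_sub, hcw]
    have hpos : 0 < normSq (phi d) :=
      lt_of_le_of_ne (Quaternion.normSq_nonneg) (Ne.symm (Quaternion.normSq_ne_zero.mpr hφd))
    have hlt2 : normSq (phi (c - d * q)) < normSq (phi d) := by
      rw [hceq, map_mul]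
      exact mul_lt_of_lt_one_right hpos hlt
    rw [normSq_phi, normSq_phi] at hlt2
    exact_mod_cast hlt2
  · right
    have hs1 : normSq s = 1 := le_antisymm hle (not_lt.mp hlt)
    have hseq := hs1
    rw [hnsq] at hseq
    have c1 : s.re ^ 2 = 1 / 4 := by linarith
    have c2 : s.imI ^ 2 = 1 / 4 := by linarith
    have c3 : s.imJ ^ 2 = 1 / 4 := by linarith
    have c4 : s.imK ^ 2 = 1 / 4 := by linarith
    obtain ⟨n1, hn1⟩ := sq_quarter c1
    obtain ⟨n2, hn2⟩ := sq_quarter c2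
    obtain ⟨n3, hn3⟩ := sq_quarter c3
    obtain ⟨n4, hn4⟩ := sq_quarter c4
    set e : Quaternion ℤ := ⟨n1, n2, n3, n4⟩ with he
    have hφe : phi e = s + s := by
      ext
      · show (n1 : ℚ) = (s + s).re
        rw [Quaternion.re_add]; linarith [hn1]
      · show (n2 : ℚ) = (s + s).imI
        rw [Quaternion.imI_add]; linarith [hn2]
      · show (n3 : ℚ) = (s + s).imJ
        rw [Quaternion.imJ_add]; linarith [hn3]
      · show (n4 : ℚ) = (s + s).imK
        rw [Quaternion.imK_add]; linarith [hn4]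
    obtain ⟨x, y, hxy⟩ := hcd
    set m : Quaternion ℤ := q * x + y with hm
    set g : Quaternion ℤ := ((2 : ℤ) : Quaternion ℤ) * m + e * x with hg
    clear_value s m g e
    have hxy' : phi c * phi x + phi d * phi y = 1 := by
      rw [← map_mul, ← map_mul, ← map_add, hxy, map_one]
    have h2Z : phi ((2 : ℤ) : Quaternion ℤ) = 1 + 1 := by
      ext
      · rw [phi_re, Quaternion.re_intCast, Quaternion.re_add, Quaternion.re_one]; norm_num
      · rw [phi_imI, Quaternion.imI_intCast, Quaternion.imI_add, Quaternion.imI_one]; norm_num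
      · rw [phi_imJ, Quaternion.imJ_intCast, Quaternion.imJ_add, Quaternion.imJ_one]; norm_num
      · rw [phi_imK, Quaternion.imK_intCast, Quaternion.imK_add, Quaternion.imK_one]; norm_num
    have hdg : d * g = ((2 : ℤ) : Quaternion ℤ) := by
      apply phi_inj
      rw [map_mul, hg, map_add, map_mul, map_mul, hφe, hm, map_add, map_mul, h2Z, hs]
      rw [expand_lemma (phi d) (phi q) (phi x) (phi y) w, hcw, hxy']
    have hnormdg : normSq d * normSq g = 4 := by
      have h := congrArg normSq hdg
      rw [map_mul, Quaternion.normSq_intCast] at h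
      rw [h]; norm_num
    have hne : normSq e = 4 := by
      have h := normSq_phi e
      rw [hφe] at h
      have hss : normSq (s + s) = 4 * normSq s := by
        have : s + s = (2 : ℚ) • s := by rw [two_smul]
        rw [this, Quaternion.normSq_smul]; ring
      rw [hss, hs1] at h
      exact_mod_cast h.symm
    have h2Q : ((2 : ℤ) : Quaternion ℤ) = 1 + 1 := by norm_num
    have h2u : ∀ u : Quaternion ℤ, ((2 : ℤ) : Quaternion ℤ) * u = u + u := by
      intro u; rw [h2Q, add_mul, one_mul]
    have hng : normSq g = 4 * (normSq m + normSq x + (m * (star x * star e)).re) := by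
      rw [hg, Quaternion.normSq_add, map_mul, map_mul, Quaternion.normSq_intCast, hne,
        star_mul, mul_assoc, h2u, Quaternion.re_add]
      ring
    have h'' : (4 : ℤ) * (normSq d * (normSq m + normSq x + (m * (star x * star e)).re))
        = 4 * 1 := by linear_combination hnormdg - normSq d * hng
    have hdz := mul_left_cancel₀ (by norm_num : (4 : ℤ) ≠ 0) h''
    rcases Int.isUnit_iff.mp (IsUnit.of_mul_eq_one _ hdz) with h | h
    · exact h
    · have := Quaternion.normSq_nonneg (a := d)
      rw [h] at this
      norm_num at this


abbrev Lq := Quaternion ℤ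

lemma row_unimodular (u : (Matrix (Fin 2) (Fin 2) Lq)ˣ) :
    ∃ x y : Lq, u.val 1 0 * x + u.val 1 1 * y = 1 := by
  refine ⟨u.inv 0 1, u.inv 1 1, ?_⟩
  have h1 : (u.val * u.inv) 1 1 = (1 : Matrix (Fin 2) (Fin 2) Lq) 1 1 := by rw [u.val_inv]
  rwa [entry_mul, Matrix.one_apply_eq] at h1

lemma step_d0 (u : (Matrix (Fin 2) (Fin 2) Lq)ˣ) (hd : u.val 1 1 = 0) : u ∈ GE2 Lq := by
  have h10 : (u * Em Lq 0).val 1 0 = 0 := by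
    show (u.val * (Em Lq 0).val) 1 0 = 0
    rw [entry_mul]
    have e1 : (Em Lq 0).val 0 0 = 0 := rfl
    have e2 : (Em Lq 0).val 1 0 = -1 := rfl
    rw [e1, e2, hd, mul_zero, zero_mul, add_zero]
  exact (Subgroup.mul_mem_cancel_right _ (Em_mem (R := Lq) 0)).mp (tri _ h10)

lemma step_unit (u : (Matrix (Fin 2) (Fin 2) Lq)ˣ) (hd : IsUnit (u.val 1 1)) :
    u ∈ GE2 Lq := by
  rcases hd with ⟨du, hdu⟩
  have h10 : (u * Lm (-(du.inv * u.val 1 0))).val 1 0 = 0 := by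
    show (u.val * (Lm (-(du.inv * u.val 1 0))).val) 1 0 = 0
    rw [Lm_val, entry_mul]
    have e1 : (!![1, 0; -(du.inv * u.val 1 0), 1] : Matrix (Fin 2) (Fin 2) Lq) 0 0 = 1 := rfl
    have e2 : (!![1, 0; -(du.inv * u.val 1 0), 1] : Matrix (Fin 2) (Fin 2) Lq) 1 0
        = -(du.inv * u.val 1 0) := rfl
    rw [e1, e2, mul_one, ← hdu, mul_neg, ← mul_assoc, du.val_inv, one_mul, add_neg_cancel]
  exact (Subgroup.mul_mem_cancel_right _ (Lm_mem (R := Lq) _)).mp (tri _ h10)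

lemma main_aux : ∀ n : ℕ, ∀ u : (Matrix (Fin 2) (Fin 2) Lq)ˣ,
    (normSq (u.val 1 1)).natAbs ≤ n → u ∈ GE2 Lq := by
  intro n
  induction n with
  | zero =>
    intro u h
    apply step_d0
    have h0 : normSq (u.val 1 1) = 0 := Int.natAbs_eq_zero.mp (Nat.le_zero.mp h)
    exact Quaternion.normSq_eq_zero.mp h0
  | succ n ih =>
    intro u h
    by_cases hd : u.val 1 1 = 0
    · exact step_d0 u hd
    · obtain ⟨x, y, hxy⟩ := row_unimodular u
      rcases euclid (u.val 1 0) (u.val 1 1) hd ⟨x, y, hxy⟩ with ⟨q, hq⟩ | hn1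
      · have hM : (Lm (-q)).val * (Em Lq 0).val = !![0, 1; -1, -q] := by
          rw [Lm_val]
          have : (Em Lq 0).val = !![(0 : Lq), 1; -1, 0] := rfl
          rw [this, Matrix.mul_fin_two]
          congr 1 <;> simp
        have hv11 : (u * (Lm (-q) * Em Lq 0)).val 1 1 = u.val 1 0 - u.val 1 1 * q := by
          show (u.val * ((Lm (-q)).val * (Em Lq 0).val)) 1 1 = _
          rw [hM, entry_mul]
          have e1 : (!![(0 : Lq), 1; -1, -q]) 0 1 = 1 := rfl
          have e2 : (!![(0 : Lq), 1; -1, -q]) 1 1 = -q := rfl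
          rw [e1, e2, mul_one, mul_neg]
          exact (sub_eq_add_neg _ _).symm
        have hle : (normSq ((u * (Lm (-q) * Em Lq 0)).val 1 1)).natAbs ≤ n := by
          rw [hv11]
          have hlt := Int.natAbs_lt_natAbs_of_nonneg_of_lt Quaternion.normSq_nonneg hq
          omega
        have hv := ih _ hle
        exact (Subgroup.mul_mem_cancel_right _ (mul_mem (Lm_mem (R := Lq) (-q)) (Em_mem (R := Lq) 0))).mp hv
      · exact step_unit u (isUnit_of_normSq_eq_one hn1)

end GE2Proof

/-- The ring `ℒ` of Lipschitz quaternions is a `GE₂`-ring: `GE₂(ℒ)` is the whole unit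
group of `M₂(ℒ)`. -/
theorem GE2_lipschitz_eq_top : GE2 (Quaternion ℤ) = ⊤ := by
  rw [eq_top_iff]
  intro u _
  exact GE2Proof.main_aux (Quaternion.normSq (u.val 1 1)).natAbs u le_rfl
end
end

section
/- For every n ≥ 1, the group GE₂(Γ_n(ℤ)) is generated by the finitely many elements E(x) for x ∈ {0} ∪ 𝓑 and the diagonal matrices diag(μ, μ) and diag(μ, −μ) for μ ∈ 𝓑, where 𝓑 = {±1, ±i_1, …, ±i_{n−1}}; in particular GE₂(Γ_n(ℤ)) is a finitely generated group. -/
noncomputable section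

open CliffordAlgebra

/-- The set `𝓑 = {±1, ±i_1, …, ±i_{n-1}}` inside `C_n(ℤ)`. -/
def Bset (n : ℕ) : Set (Cl n) :=
  insert 1 (insert (-1) (Set.range (iGen n) ∪ Set.range fun h => -iGen n h))

/-- The group `GE₂(Γ_n(ℤ))`, generated by the `E(x)` for `x ∈ Vⁿ(ℤ)` together with all
diagonal matrices `diag(μ, ν)` with `μ, ν ∈ U_n` and `μ·ν* = ±1`. -/
def GE2Gamma (n : ℕ) : Subgroup (Matrix (Fin 2) (Fin 2) (Cl n))ˣ :=
  Subgroup.closure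
    ({u | ∃ x ∈ Vn n, u = Eu n x} ∪
     {u : (Matrix (Fin 2) (Fin 2) (Cl n))ˣ | ∃ μ ν : (Cl n)ˣ, μ ∈ Un n ∧ ν ∈ Un n ∧
       ((μ : Cl n) * reverse ((ν : Cl n)) = 1 ∨ (μ : Cl n) * reverse ((ν : Cl n)) = -1) ∧
       u.val = !![(μ : Cl n), 0; 0, (ν : Cl n)]})

section Aux

variable (n : ℕ)

lemma Eu_val (x : Cl n) : (Eu n x).val = !![x, 1; -1, 0] := rfl

lemma Eu_inv_val (x : Cl n) : ((Eu n x)⁻¹).val = !![0, -1; 1, x] := rfl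

lemma Eu_add (x y : Cl n) : Eu n (x + y) = Eu n x * (Eu n 0)⁻¹ * Eu n y := by
  refine Units.ext ?_
  simp only [Units.val_mul, Eu_val, Eu_inv_val]
  ext i j
  fin_cases i <;> fin_cases j <;>
    simp [Matrix.mul_apply, Fin.sum_univ_two, add_comm]

lemma Eu_neg (x : Cl n) : Eu n (-x) = Eu n 0 * (Eu n x)⁻¹ * Eu n 0 := by
  refine Units.ext ?_
  simp only [Units.val_mul, Eu_val, Eu_inv_val]
  ext i j
  fin_cases i <;> fin_cases j <;>
    simp [Matrix.mul_apply, Fin.sum_univ_two]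

/-- The diagonal unit `diag(μ, ν)`. -/
def Du (μ ν : (Cl n)ˣ) : (Matrix (Fin 2) (Fin 2) (Cl n))ˣ where
  val := !![(μ : Cl n), 0; 0, (ν : Cl n)]
  inv := !![((μ⁻¹ : (Cl n)ˣ) : Cl n), 0; 0, ((ν⁻¹ : (Cl n)ˣ) : Cl n)]
  val_inv := by
    ext i j
    fin_cases i <;> fin_cases j <;>
      simp [Matrix.mul_apply, Fin.sum_univ_two, Matrix.one_apply]
  inv_val := by
    ext i j
    fin_cases i <;> fin_cases j <;>
      simp [Matrix.mul_apply, Fin.sum_univ_two, Matrix.one_apply]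

lemma Du_val (μ ν : (Cl n)ˣ) : (Du n μ ν).val = !![(μ : Cl n), 0; 0, (ν : Cl n)] := rfl

lemma Du_mul (μ ν μ' ν' : (Cl n)ˣ) :
    Du n μ ν * Du n μ' ν' = Du n (μ * μ') (ν * ν') := by
  refine Units.ext ?_
  simp only [Units.val_mul, Du_val]
  ext i j
  fin_cases i <;> fin_cases j <;>
    simp [Matrix.mul_apply, Fin.sum_univ_two]

/-- `(reverse μ)⁻¹ = reverse (μ⁻¹)` as a unit. -/
def rUnit (μ : (Cl n)ˣ) : (Cl n)ˣ where
  val := reverse (Q := Qf n) μ.inv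
  inv := reverse (Q := Qf n) μ.val
  val_inv := by rw [← reverse.map_mul, Units.val_inv]; simp
  inv_val := by rw [← reverse.map_mul, Units.inv_val]; simp

lemma rUnit_val (μ : (Cl n)ˣ) : (rUnit n μ : Cl n) = reverse (Q := Qf n) μ.inv := rfl

lemma rUnit_one : rUnit n 1 = 1 := by
  refine Units.ext ?_
  show reverse (Q := Qf n) (1 : Cl n) = 1
  simp

lemma rUnit_mul (a b : (Cl n)ˣ) : rUnit n (a * b) = rUnit n a * rUnit n b := by
  refine Units.ext ?_
  show reverse (Q := Qf n) (b.inv * a.inv) =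
    reverse (Q := Qf n) a.inv * reverse (Q := Qf n) b.inv
  rw [reverse.map_mul]

lemma Du_one : Du n 1 1 = 1 := by
  refine Units.ext ?_
  rw [Du_val]
  ext i j
  fin_cases i <;> fin_cases j <;> simp [Matrix.one_apply]

/-- The homomorphism `μ ↦ diag(μ, (μ*)⁻¹)`. -/
def psi : (Cl n)ˣ →* (Matrix (Fin 2) (Fin 2) (Cl n))ˣ where
  toFun μ := Du n μ (rUnit n μ)
  map_one' := by
    show Du n 1 (rUnit n 1) = 1
    rw [rUnit_one, Du_one]
  map_mul' := fun a b => by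
    show Du n (a * b) (rUnit n (a * b)) = Du n a (rUnit n a) * Du n b (rUnit n b)
    rw [Du_mul, rUnit_mul]

/-- The finite generating set. -/
def Sfin : Set (Matrix (Fin 2) (Fin 2) (Cl n))ˣ :=
  ({u | ∃ x ∈ insert (0 : Cl n) (Bset n), u = Eu n x} ∪
   {u : (Matrix (Fin 2) (Fin 2) (Cl n))ˣ | ∃ μ ∈ Bset n,
     u.val = !![μ, 0; 0, μ] ∨ u.val = !![μ, 0; 0, -μ]})

lemma one_mem_Bset : (1 : Cl n) ∈ Bset n := Set.mem_insert _ _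
lemma neg_one_mem_Bset : (-1 : Cl n) ∈ Bset n := Set.mem_insert_of_mem _ (Set.mem_insert _ _)
lemma iGen_mem_Bset (h : Fin (n-1)) : iGen n h ∈ Bset n :=
  Set.mem_insert_of_mem _ (Set.mem_insert_of_mem _ (Or.inl ⟨h, rfl⟩))
lemma neg_iGen_mem_Bset (h : Fin (n-1)) : -iGen n h ∈ Bset n :=
  Set.mem_insert_of_mem _ (Set.mem_insert_of_mem _ (Or.inr ⟨h, rfl⟩))

lemma Eu_mem_Hgrp : ∀ x ∈ Vn n, Eu n x ∈ Subgroup.closure (Sfin n) := by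
  have hE0 : Eu n 0 ∈ Subgroup.closure (Sfin n) :=
    Subgroup.subset_closure (Or.inl ⟨0, Set.mem_insert _ _, rfl⟩)
  set T : AddSubgroup (Cl n) :=
    { carrier := {x | Eu n x ∈ Subgroup.closure (Sfin n)}
      zero_mem' := hE0
      add_mem' := fun {x y} hx hy => by
        show Eu n (x + y) ∈ Subgroup.closure (Sfin n)
        rw [Eu_add]
        exact mul_mem (mul_mem hx (inv_mem hE0)) hy
      neg_mem' := fun {x} hx => by
        show Eu n (-x) ∈ Subgroup.closure (Sfin n)
        rw [Eu_neg]
        exact mul_mem (mul_mem hE0 (inv_mem hx)) hE0 } with hT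
  intro x hx
  have : Vn n ≤ AddSubgroup.toIntSubmodule T := by
    rw [Vn, Submodule.span_le]
    rintro y (rfl | ⟨h, rfl⟩)
    · exact Subgroup.subset_closure (Or.inl ⟨1, Set.mem_insert_of_mem _ (one_mem_Bset n), rfl⟩)
    · exact Subgroup.subset_closure
        (Or.inl ⟨iGen n h, Set.mem_insert_of_mem _ (iGen_mem_Bset n h), rfl⟩)
  exact this hx

lemma psi_mem_Hgrp : ∀ μ ∈ Un n, psi n μ ∈ Subgroup.closure (Sfin n) := by
  have : Un n ≤ (Subgroup.closure (Sfin n)).comap (psi n) := by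
    rw [Un, Subgroup.closure_le]
    rintro μ (rfl | ⟨h, rfl⟩)
    · refine Subgroup.subset_closure (Or.inr ⟨-1, neg_one_mem_Bset n, Or.inl ?_⟩)
      show (Du n _ _).val = _
      rw [Du_val, rUnit_val]
      norm_num
    · refine Subgroup.subset_closure (Or.inr ⟨iGen n h, iGen_mem_Bset n h, Or.inr ?_⟩)
      show (Du n _ _).val = _
      rw [Du_val, rUnit_val]
      show !![iGen n h, 0; 0, reverse (Q := Qf n) (-iGen n h)] = _
      rw [map_neg, iGen, reverse_ι]
  exact fun μ hμ => this hμ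

lemma Bset_unit : ∀ μ ∈ Bset n, ∃ m : (Cl n)ˣ, m ∈ Un n ∧ (m : Cl n) = μ ∧
    reverse (Q := Qf n) μ = μ ∧ (μ * μ = 1 ∨ μ * μ = -1) := by
  rintro μ (rfl | rfl | ⟨h, rfl⟩ | ⟨h, rfl⟩)
  · exact ⟨1, one_mem _, rfl, by simp, Or.inl (by simp)⟩
  · exact ⟨-1, Subgroup.subset_closure (Set.mem_insert _ _), rfl, by simp, Or.inl (by simp)⟩
  · exact ⟨iUnit n h, Subgroup.subset_closure (Set.mem_insert_of_mem _ ⟨h, rfl⟩), rfl,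
      by rw [iGen, reverse_ι], Or.inr (iGen_sq n h)⟩
  · show ∃ m : (Cl n)ˣ, m ∈ Un n ∧ (m : Cl n) = -iGen n h ∧
      reverse (Q := Qf n) (-iGen n h) = -iGen n h ∧
      (-iGen n h * -iGen n h = 1 ∨ -iGen n h * -iGen n h = -1)
    refine ⟨-iUnit n h, ?_, rfl, ?_, Or.inr ?_⟩
    · have : (-iUnit n h : (Cl n)ˣ) = -1 * iUnit n h := by simp
      rw [this]
      exact mul_mem (Subgroup.subset_closure (Set.mem_insert _ _))
        (Subgroup.subset_closure (Set.mem_insert_of_mem _ ⟨h, rfl⟩))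
    · rw [map_neg, iGen, reverse_ι]
    · rw [neg_mul_neg, iGen_sq]

end Aux


/-- For every `n ≥ 1`, the group `GE₂(Γ_n(ℤ))` is generated by the finitely many elements
`E(x)` for `x ∈ {0} ∪ 𝓑` and the diagonal matrices `diag(μ, μ)`, `diag(μ, -μ)` for `μ ∈ 𝓑`;
in particular it is finitely generated. -/
theorem GE2Gamma_finitely_generated (n : ℕ) (hn : 1 ≤ n) :
    GE2Gamma n = Subgroup.closure
      ({u | ∃ x ∈ insert (0 : Cl n) (Bset n), u = Eu n x} ∪
       {u : (Matrix (Fin 2) (Fin 2) (Cl n))ˣ | ∃ μ ∈ Bset n,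
         u.val = !![μ, 0; 0, μ] ∨ u.val = !![μ, 0; 0, -μ]}) ∧
    Group.FG ↥(GE2Gamma n) := by
  have hEq : GE2Gamma n = Subgroup.closure (Sfin n) := by
    apply le_antisymm
    · rw [GE2Gamma, Subgroup.closure_le]
      rintro u (⟨x, hx, rfl⟩ | ⟨μ, ν, hμ, hν, hrev, hval⟩)
      · exact Eu_mem_Hgrp n x hx
      · have hu : u = Du n μ ν := Units.ext (by rw [hval, Du_val])
        have key : ∀ ε : Cl n, (μ : Cl n) * reverse (Q := Qf n) (ν : Cl n) = ε →
            (ν : Cl n) = reverse (Q := Qf n) (((μ⁻¹ : (Cl n)ˣ) : Cl n) * ε) := by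
          intro ε hε
          have h1 : reverse (Q := Qf n) (ν : Cl n) = ((μ⁻¹ : (Cl n)ˣ) : Cl n) * ε := by
            rw [← hε, ← mul_assoc, Units.inv_mul, one_mul]
          rw [← reverse_reverse (Q := Qf n) (ν : Cl n), h1]
        rcases hrev with h | h
        · have hν2 : ν = rUnit n μ := by
            refine Units.ext ?_
            rw [key 1 h, mul_one, rUnit_val, Units.inv_eq_val_inv]
          rw [hu, hν2]
          exact psi_mem_Hgrp n μ hμ
        · have hν2 : ν = rUnit n μ * (-1) := by
            refine Units.ext ?_
            rw [key (-1) h, mul_neg_one, map_neg]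
            simp [Units.val_mul, rUnit_val, Units.inv_eq_val_inv]
          have hDu : Du n μ ν = Du n μ (rUnit n μ) * Du n 1 (-1) := by
            rw [Du_mul, mul_one, hν2]
          rw [hu, hDu]
          refine mul_mem (psi_mem_Hgrp n μ hμ) (Subgroup.subset_closure ?_)
          refine Or.inr ⟨1, one_mem_Bset n, Or.inr ?_⟩
          rw [Du_val]
          simp
    · rw [GE2Gamma, Subgroup.closure_le]
      rintro u hu
      rcases hu with ⟨x, hx, rfl⟩ | ⟨μ, hμ, hval⟩
      · refine Subgroup.subset_closure (Or.inl ⟨x, ?_, rfl⟩)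
        rcases hx with rfl | rfl | rfl | ⟨h, rfl⟩ | ⟨h, rfl⟩
        · exact zero_mem _
        · exact Submodule.subset_span (Set.mem_insert _ _)
        · exact neg_mem (Submodule.subset_span (Set.mem_insert _ _))
        · exact Submodule.subset_span (Set.mem_insert_of_mem _ ⟨h, rfl⟩)
        · exact neg_mem (Submodule.subset_span (Set.mem_insert_of_mem _ ⟨h, rfl⟩))
      · obtain ⟨m, hm, hmv, hrevμ, hsq⟩ := Bset_unit n μ hμ
        rcases hval with h | h
        · refine Subgroup.subset_closure (Or.inr ⟨m, m, hm, hm, ?_, ?_⟩)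
          · rw [hmv, hrevμ]; exact hsq
          · rw [h, hmv]
        · have hnegm : (-m : (Cl n)ˣ) ∈ Un n := by
            have : (-m : (Cl n)ˣ) = -1 * m := by simp
            rw [this]
            exact mul_mem (Subgroup.subset_closure (Set.mem_insert _ _)) hm
          refine Subgroup.subset_closure (Or.inr ⟨m, -m, hm, hnegm, ?_, ?_⟩)
          · rw [Units.val_neg, hmv, map_neg, hrevμ, mul_neg]
            rcases hsq with h2 | h2
            · rw [h2]; exact Or.inr rfl
            · rw [h2]; exact Or.inl (by rw [neg_neg])
          · rw [h, hmv, Units.val_neg, hmv]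
  refine ⟨hEq, ?_⟩
  rw [Group.fg_iff_subgroup_fg, Subgroup.fg_iff]
  refine ⟨Sfin n, hEq.symm, ?_⟩
  have hB : (Bset n).Finite := by
    apply Set.Finite.insert
    apply Set.Finite.insert
    exact (Set.finite_range _).union (Set.finite_range _)
  apply Set.Finite.union
  · have hsub : {u | ∃ x ∈ insert (0 : Cl n) (Bset n), u = Eu n x} ⊆
        Eu n '' insert 0 (Bset n) := by
      rintro u ⟨x, hx, rfl⟩
      exact ⟨x, hx, rfl⟩
    exact ((hB.insert 0).image _).subset hsub
  · have hsub : {u : (Matrix (Fin 2) (Fin 2) (Cl n))ˣ | ∃ μ ∈ Bset n,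
        u.val = !![μ, 0; 0, μ] ∨ u.val = !![μ, 0; 0, -μ]} ⊆
        Units.val ⁻¹' ((fun μ : Cl n => !![μ, 0; 0, μ]) '' Bset n ∪
          (fun μ : Cl n => !![μ, 0; 0, -μ]) '' Bset n) := by
      rintro u ⟨μ, hμ, h | h⟩
      · exact Or.inl ⟨μ, hμ, h.symm⟩
      · exact Or.inr ⟨μ, hμ, h.symm⟩
    refine Set.Finite.subset ?_ hsub
    exact Set.Finite.preimage (Function.Injective.injOn Units.val_injective)
      ((hB.image _).union (hB.image _))
end
end

section
/- Let d ≥ 4 be an integer and let 𝒪 = ℤ[√−d] (in Lean: Zsqrtd (−d)). Then E₂(𝒪) is isomorphic to the amalgamated free product E₂(ℤ) ∗_{B₂'(ℤ)} B₂'(𝒪), where the two maps from B₂'(ℤ) are the natural inclusions (the one into B₂'(𝒪) induced by the coefficient ring embedding ℤ → 𝒪); moreover this amalgamated product is nontrivial, i.e. both inclusions are injective and neither is surjective. -/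
universe u v w

/-- A two-element family of types indexed by `Bool`. -/
def boolFam (A B : Type u) : Bool → Type u := fun b => match b with
  | true => A
  | false => B

instance boolFamGroup {A B : Type u} [Group A] [Group B] : ∀ b, Group (boolFam A B b)
  | true => inferInstanceAs (Group A)
  | false => inferInstanceAs (Group B)

/-- The pair of maps `f : C →* A`, `g : C →* B` as a `Bool`-indexed family. -/
def boolHoms {A B C : Type u} [Group A] [Group B] [Group C] (f : C →* A) (g : C →* B) :
    (b : Bool) → C →* boolFam A B b
  | true => f
  | false => g

/-- A group `Γ` is a nontrivial free product with amalgamation if it is isomorphic to the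
pushout (amalgamated free product) `A ∗_C B` of two injective, non-surjective group
homomorphisms `f : C → A` and `g : C → B`. -/
def IsNontrivialAmalgam (Γ : Type v) [Group Γ] : Prop :=
  ∃ (A B C : Type v) (_ : Group A) (_ : Group B) (_ : Group C)
    (f : C →* A) (g : C →* B),
      Function.Injective f ∧ Function.Injective g ∧
      ¬ Function.Surjective f ∧ ¬ Function.Surjective g ∧
      Nonempty (Γ ≃* Monoid.PushoutI (boolHoms f g))

noncomputable section

def B2set (R : Type*) [Ring R] : Set (Matrix (Fin 2) (Fin 2) R)ˣ :=
  {u | u.val 1 0 = 0 ∧ (u⁻¹).val 1 0 = 0}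

lemma one_mem_B2set (R : Type*) [Ring R] : (1 : (Matrix (Fin 2) (Fin 2) R)ˣ) ∈ B2set R :=
  ⟨by simp [Matrix.one_apply], by simp [Matrix.one_apply]⟩

lemma mul_mem_B2set (R : Type*) [Ring R] {u v : (Matrix (Fin 2) (Fin 2) R)ˣ}
    (hu : u ∈ B2set R) (hv : v ∈ B2set R) : u * v ∈ B2set R := by
  obtain ⟨hu1, hu2⟩ := hu
  obtain ⟨hv1, hv2⟩ := hv
  constructor
  · show ((u * v).val) 1 0 = 0
    rw [Units.val_mul]
    rw [Matrix.mul_apply, Fin.sum_univ_two, hu1, hv1, zero_mul, mul_zero, add_zero]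
  · show (((u * v)⁻¹).val) 1 0 = 0
    rw [mul_inv_rev, Units.val_mul]
    rw [Matrix.mul_apply, Fin.sum_univ_two, hu2, hv2, zero_mul, mul_zero, add_zero]

lemma inv_mem_B2set (R : Type*) [Ring R] {u : (Matrix (Fin 2) (Fin 2) R)ˣ}
    (hu : u ∈ B2set R) : u⁻¹ ∈ B2set R := by
  obtain ⟨hu1, hu2⟩ := hu
  exact ⟨hu2, by simpa using hu1⟩

/-- The Borel subgroup `B₂(R)` of upper-triangular matrices in the unit group of `M₂(R)`. -/
def B2 (R : Type*) [Ring R] : Subgroup (Matrix (Fin 2) (Fin 2) R)ˣ where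
  carrier := B2set R
  one_mem' := one_mem_B2set R
  mul_mem' := fun hu hv => mul_mem_B2set R hu hv
  inv_mem' := fun hu => inv_mem_B2set R hu

/-- `B₂'(R) = E₂(R) ∩ B₂(R)`. -/
def B2' (R : Type*) [Ring R] : Subgroup (Matrix (Fin 2) (Fin 2) R)ˣ :=
  E2 R ⊓ B2 R

/-- The natural inclusion `B₂'(ℤ) → E₂(ℤ)`. -/
def inclB2' : ↥(B2' ℤ) →* ↥(E2 ℤ) :=
  Subgroup.inclusion inf_le_left



noncomputable section
namespace E2Amalgam
open Matrix Complex

abbrev GC := (Matrix (Fin 2) (Fin 2) ℂ)ˣ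

def IntMat (m : Matrix (Fin 2) (Fin 2) ℂ) : Prop := ∀ i j, ∃ n : ℤ, m i j = (n : ℂ)

def PA (u : GC) : Prop := IntMat u.val ∧ u.val.det = 1 ∧ u.val 1 0 ≠ 0
def PB (u : GC) : Prop := ∃ (e t : ℂ), (e = 1 ∨ e = -1) ∧ 2 ≤ |t.im| ∧ u.val = !![e, t; 0, e]
def PC (u : GC) : Prop := IntMat u.val ∧
  ∃ (e r : ℂ), (e = 1 ∨ e = -1) ∧ r.im = 0 ∧ u.val = !![e, r; 0, e]

def Reg : Bool → (Fin 2 → ℂ) → Prop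
  | true, v => v 1 ≠ 0 ∧ 1 < |(v 0 / v 1).im|
  | false, v => v 1 ≠ 0 ∧ |(v 0 / v 1).im| < 1

lemma Reg_true (v : Fin 2 → ℂ) : Reg true v ↔ (v 1 ≠ 0 ∧ 1 < |(v 0 / v 1).im|) := Iff.rfl

lemma Reg_false (v : Fin 2 → ℂ) : Reg false v ↔ (v 1 ≠ 0 ∧ |(v 0 / v 1).im| < 1) := Iff.rfl

lemma Reg.ne_zero {b : Bool} {v : Fin 2 → ℂ} (h : Reg b v) : v 1 ≠ 0 := by
  cases b <;> exact h.1

lemma units_inv_val_eq {M : Type*} [Monoid M] (u : Mˣ) (m : M) (h : u.val * m = 1) :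
    ((u⁻¹ : Mˣ) : M) = m := by
  calc ((u⁻¹ : Mˣ) : M) = ((u⁻¹ : Mˣ) : M) * (u.val * m) := by rw [h, mul_one]
  _ = m := by rw [← mul_assoc, Units.inv_mul, one_mul]

lemma unit_inv_val_adj {R : Type*} [CommRing R] (u : (Matrix (Fin 2) (Fin 2) R)ˣ)
    (h : u.val.det = 1) :
    ((u⁻¹ : (Matrix (Fin 2) (Fin 2) R)ˣ) : Matrix (Fin 2) (Fin 2) R)
      = !![u.val 1 1, -u.val 0 1; -u.val 1 0, u.val 0 0] := by
  apply units_inv_val_eq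
  rw [← Matrix.adjugate_fin_two, Matrix.mul_adjugate, h, one_smul]

lemma IntMat.mul {m m' : Matrix (Fin 2) (Fin 2) ℂ} (h : IntMat m) (h' : IntMat m') :
    IntMat (m * m') := by
  intro i j
  obtain ⟨a, ha⟩ := h i 0; obtain ⟨b, hb⟩ := h i 1
  obtain ⟨c, hc⟩ := h' 0 j; obtain ⟨d, hd⟩ := h' 1 j
  exact ⟨a * c + b * d, by rw [Matrix.mul_apply, Fin.sum_univ_two, ha, hb, hc, hd]; push_cast; ring⟩

lemma mulVec_pair (m : Matrix (Fin 2) (Fin 2) ℂ) (v : Fin 2 → ℂ) :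
    m.mulVec v = ![m 0 0 * v 0 + m 0 1 * v 1, m 1 0 * v 0 + m 1 1 * v 1] := by
  funext i
  fin_cases i <;> simp [Matrix.mulVec, dotProduct, Fin.sum_univ_two]

lemma mulVec_tri (e t : ℂ) (v : Fin 2 → ℂ) :
    (!![e, t; 0, e]).mulVec v = ![e * v 0 + t * v 1, e * v 1] := by
  funext i
  fin_cases i <;>
    simp [Matrix.mulVec, dotProduct, Fin.sum_univ_two]

lemma stepA {u : GC} (hu : PA u) {v : Fin 2 → ℂ} (hv : Reg true v) :
    Reg false (u.val.mulVec v) := by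
  obtain ⟨hint, hdet, hc⟩ := hu
  obtain ⟨na, ha⟩ := hint 0 0
  obtain ⟨nb, hb⟩ := hint 0 1
  obtain ⟨nc, hcv⟩ := hint 1 0
  obtain ⟨nd, hd⟩ := hint 1 1
  rw [Reg_true] at hv
  obtain ⟨hv1, hz⟩ := hv
  set z : ℂ := v 0 / v 1 with hzdef
  have hv0 : v 0 = z * v 1 := by rw [hzdef, div_mul_cancel₀ _ hv1]
  have hnc : (nc : ℂ) ≠ 0 := hcv ▸ hc
  have hncZ : nc ≠ 0 := by exact_mod_cast hnc
  have hdet' : na * nd - nb * nc = 1 := by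
    have := Matrix.det_fin_two u.val
    rw [hdet, ha, hb, hcv, hd] at this
    exact_mod_cast this.symm
  have hzim : 1 < |z.im| := hz
  have hzim0 : z.im ≠ 0 := by
    intro h; rw [h] at hzim; simp at hzim; linarith
  -- denominator
  have hden : ((nc : ℂ) * z + nd).im = nc * z.im := by simp
  have hdne : ((nc : ℂ) * z + nd) ≠ 0 := by
    intro h
    apply hzim0
    have := congrArg Complex.im h
    rw [hden] at this
    simp at this
    rcases this with h' | h' 
    · exact absurd h' hncZ
    · exact h'
  have hw1 : u.val 1 0 * v 0 + u.val 1 1 * v 1 = v 1 * ((nc : ℂ) * z + nd) := by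
    rw [hcv, hd, hv0]; ring
  have hw0 : u.val 0 0 * v 0 + u.val 0 1 * v 1 = v 1 * ((na : ℂ) * z + nb) := by
    rw [ha, hb, hv0]; ring
  rw [mulVec_pair, Reg_false]
  simp only [Matrix.cons_val_zero, Matrix.cons_val_one, Matrix.head_cons, hw0, hw1]
  refine ⟨mul_ne_zero hv1 hdne, ?_⟩
  rw [mul_div_mul_left _ _ hv1]
  rw [Complex.div_im]
  have hN : Complex.normSq ((nc:ℂ) * z + nd) = ((nc:ℝ) * z.re + nd)^2 + ((nc:ℝ) * z.im)^2 := by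
    rw [Complex.normSq_apply]
    simp
    ring
  have hnum : ((na:ℂ) * z + nb).im * ((nc:ℂ)*z + nd).re - ((na:ℂ)*z+nb).re * ((nc:ℂ)*z+nd).im
      = z.im := by
    simp
    have hdr : ((na:ℝ) * nd - nb * nc) = 1 := by exact_mod_cast hdet'
    linear_combination z.im * hdr
  rw [div_sub_div_same, hnum]
  have hN1 : 1 ≤ ((nc:ℝ))^2 := by
    have h1 : 1 ≤ |nc| := Int.one_le_abs hncZ
    have h2 : (1:ℝ) ≤ |(nc:ℝ)| := by exact_mod_cast h1
    nlinarith [h2, abs_nonneg ((nc:ℝ)), _root_.sq_abs ((nc:ℝ))]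
  have hNge : z.im^2 ≤ Complex.normSq ((nc:ℂ) * z + nd) := by
    rw [hN]
    nlinarith [sq_nonneg ((nc:ℝ) * z.re + nd), sq_nonneg z.im]
  have hNpos : 0 < Complex.normSq ((nc:ℂ) * z + nd) := by
    nlinarith [_root_.sq_abs z.im]
  rw [abs_div, abs_of_pos hNpos]
  rw [div_lt_one hNpos]
  nlinarith [_root_.sq_abs z.im]

lemma stepB {u : GC} (hu : PB u) {v : Fin 2 → ℂ} (hv : Reg false v) :
    Reg true (u.val.mulVec v) := by
  obtain ⟨e, t, he, ht, hval⟩ := hu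
  rw [Reg_false] at hv
  obtain ⟨hv1, hz⟩ := hv
  have he0 : e ≠ 0 := by rcases he with rfl | rfl <;> norm_num
  rw [hval, mulVec_tri, Reg_true]
  simp only [Matrix.cons_val_zero, Matrix.cons_val_one, Matrix.head_cons]
  refine ⟨mul_ne_zero he0 hv1, ?_⟩
  have h1 : (e * v 0 + t * v 1) / (e * v 1) = v 0 / v 1 + t / e := by
    field_simp
  rw [h1]
  have him : |(t / e).im| = |t.im| := by
    rcases he with rfl | rfl
    · simp
    · rw [show t / (-1 : ℂ) = -t by ring]
      simp
  set a := (v 0 / v 1).im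
  set b := (t / e).im with hbdef
  have hb2 : 2 ≤ |b| := him ▸ ht
  have key : |b| ≤ |a + b| + |a| := by
    have h := abs_add_le (a + b) (-a)
    have h2 : (a + b) + (-a) = b := by ring
    rw [h2] at h
    simpa using h
  have him2 : ((v 0 / v 1) + t / e).im = a + b := by simp [hbdef]; rfl
  rw [him2]
  linarith

end E2Amalgam

-- Layer 2: core ping-pong induction and main concrete lemma
namespace E2Amalgam
open Matrix Complex

def TagOK : Bool × GC → Prop
  | (true, u) => PA u
  | (false, u) => PB u

lemma core : ∀ (LM : List (Bool × GC)) (p : Bool × GC),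
    List.Chain' (fun a b => a.1 ≠ b.1) (p :: LM) →
    (∀ q ∈ p :: LM, TagOK q) →
    ∀ v : Fin 2 → ℂ, Reg ((p :: LM).getLast (by simp)).1 v →
    Reg (!p.1) ((((p :: LM).map Prod.snd).prod).val.mulVec v) := by
  intro LM
  induction LM with
  | nil =>
    rintro ⟨b, u⟩ _ hok v hreg
    have htag := hok (b, u) (by simp)
    rw [List.getLast_singleton] at hreg
    simp only [List.map_cons, List.map_nil, List.prod_cons, List.prod_nil, mul_one]
    cases b
    · exact stepB htag hreg
    · exact stepA htag hreg
  | cons q LM' ih =>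
    rintro ⟨b, u⟩ hchain hok v hreg
    have hlast : ((b, u) :: q :: LM').getLast (by simp) = (q :: LM').getLast (by simp) :=
      List.getLast_cons (by simp)
    rw [hlast] at hreg
    have hch' := (List.isChain_cons_cons.1 hchain).2
    have hne : (b, u).1 ≠ q.1 := (List.isChain_cons_cons.1 hchain).1
    have hok' : ∀ r ∈ q :: LM', TagOK r := fun r hr => hok r (List.mem_cons_of_mem _ hr)
    have ihres := ih q hch' hok' v hreg
    have htag := hok (b, u) (by simp)
    rw [List.map_cons, List.prod_cons, Units.val_mul, ← Matrix.mulVec_mulVec]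
    obtain ⟨b', u'⟩ := q
    cases b <;> cases b'
    · exact absurd rfl hne
    · exact stepB htag ihres
    · exact stepA htag ihres
    · exact absurd rfl hne

lemma IntMat_one : IntMat (1 : Matrix (Fin 2) (Fin 2) ℂ) := by
  intro i j
  fin_cases i <;> fin_cases j
  · exact ⟨1, by simp⟩
  · exact ⟨0, by norm_num [Matrix.one_apply]⟩
  · exact ⟨0, by norm_num [Matrix.one_apply]⟩
  · exact ⟨1, by simp⟩

lemma PC_one : PC 1 := by
  refine ⟨IntMat_one, 1, 0, Or.inl rfl, by simp, ?_⟩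
  rw [Units.val_one, Matrix.one_fin_two]

lemma PC.det {u : GC} (h : PC u) : u.val.det = 1 := by
  obtain ⟨_, e, r, he, _, hval⟩ := h
  rw [hval, Matrix.det_fin_two_of]
  rcases he with rfl | rfl <;> ring

lemma PC.entries {u : GC} (h : PC u) :
    ∃ e r : ℂ, (e = 1 ∨ e = -1) ∧ r.im = 0 ∧
      u.val 0 0 = e ∧ u.val 0 1 = r ∧ u.val 1 0 = 0 ∧ u.val 1 1 = e := by
  obtain ⟨_, e, r, he, hr, hval⟩ := h
  exact ⟨e, r, he, hr, by rw [hval]; simp, by rw [hval]; simp, by rw [hval]; simp,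
    by rw [hval]; simp⟩

lemma PC.inv {u : GC} (h : PC u) : PC u⁻¹ := by
  obtain ⟨hint, e, r, he, hr, hval⟩ := h
  have hdet : u.val.det = 1 := PC.det ⟨hint, e, r, he, hr, hval⟩
  have hinv : (u⁻¹ : GC).val = !![e, -r; 0, e] := by
    rw [unit_inv_val_adj u hdet, hval]
    ext i j
    fin_cases i <;> fin_cases j <;> simp
  refine ⟨?_, e, -r, he, by simp [hr], hinv⟩
  intro i j
  obtain ⟨n00, h00⟩ := hint 0 0
  obtain ⟨n01, h01⟩ := hint 0 1
  rw [hinv]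
  fin_cases i <;> fin_cases j
  · exact ⟨n00, by simpa [hval] using h00⟩
  · refine ⟨-n01, ?_⟩
    have : r = (n01 : ℂ) := by rw [← h01, hval]; simp
    simp [this]
  · exact ⟨0, by simp⟩
  · refine ⟨n00, ?_⟩
    have : e = (n00 : ℂ) := by rw [← h00, hval]; simp
    simp [this]

lemma PC.mul {u u' : GC} (h : PC u) (h' : PC u') : PC (u * u') := by
  obtain ⟨hint, e, r, he, hr, hval⟩ := h
  obtain ⟨hint', e', r', he', hr', hval'⟩ := h'
  refine ⟨?_, e * e', e * r' + r * e', ?_, ?_, ?_⟩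
  · rw [Units.val_mul]; exact IntMat.mul hint hint'
  · rcases he with rfl | rfl <;> rcases he' with rfl | rfl <;> norm_num
  · have h1 : e.im = 0 := by rcases he with rfl | rfl <;> simp
    have h2 : e'.im = 0 := by rcases he' with rfl | rfl <;> simp
    have h3 : e.re ≠ 42 ∨ True := Or.inr trivial
    simp [Complex.add_im, Complex.mul_im, h1, h2, hr, hr']
  · rw [Units.val_mul, hval, hval']
    ext i j
    fin_cases i <;> fin_cases j <;>
      simp [Matrix.mul_apply, Fin.sum_univ_two] <;> ring

lemma pureMain (p : Bool × GC) (LM : List (Bool × GC))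
    (hchain : List.Chain' (fun a b => a.1 ≠ b.1) (p :: LM))
    (hok : ∀ q ∈ p :: LM, TagOK q)
    (hpure : ((p :: LM).getLast (by simp)).1 = p.1)
    (c c₂ : GC) (hc : PC c) (hc₂ : PC c₂)
    (hrel : c * ((p :: LM).map Prod.snd).prod * c₂ = 1) : False := by
  have hP : ((p :: LM).map Prod.snd).prod = c⁻¹ * c₂⁻¹ := by
    have := congrArg (fun x => c⁻¹ * x * c₂⁻¹) hrel
    simpa [mul_assoc] using this
  have hPC : PC (c⁻¹ * c₂⁻¹) := PC.mul (PC.inv hc) (PC.inv hc₂)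
  obtain ⟨hint, e, r, he, hr, hval⟩ := hPC
  rw [← hP] at hval
  have he0 : e ≠ 0 := by rcases he with rfl | rfl <;> norm_num
  cases hb : p.1
  · -- starts (and ends) with a B letter : test vector ![0, 1]
    have h0 : Reg false ![0, 1] := by
      rw [Reg_false]
      norm_num
    have hcore := core LM p hchain hok ![0, 1] (by rw [hpure, hb]; exact h0)
    rw [hval, mulVec_tri, hb] at hcore
    simp only [Bool.not_false] at hcore
    rw [Reg_true] at hcore
    simp only [Matrix.cons_val_zero, Matrix.cons_val_one, Matrix.head_cons] at hcore
    obtain ⟨-, hgt⟩ := hcore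
    have : (e * 0 + r * 1) / (e * 1) = r / e := by ring_nf
    rw [this] at hgt
    have : |(r / e).im| = 0 := by
      rcases he with rfl | rfl
      · simp [hr]
      · rw [show r / (-1 : ℂ) = -r by ring]
        simp [hr]
    rw [this] at hgt
    linarith
  · -- starts (and ends) with an A letter : test vector ![2i, 1]
    have h2 : Reg true ![2 * Complex.I, 1] := by
      rw [Reg_true]
      norm_num
    have hcore := core LM p hchain hok ![2 * Complex.I, 1] (by rw [hpure, hb]; exact h2)
    rw [hval, mulVec_tri, hb] at hcore
    simp only [Bool.not_true] at hcore
    rw [Reg_false] at hcore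
    simp only [Matrix.cons_val_zero, Matrix.cons_val_one, Matrix.head_cons] at hcore
    obtain ⟨-, hlt⟩ := hcore
    have heq : (e * (2 * Complex.I) + r * 1) / (e * 1) = 2 * Complex.I + r / e := by
      field_simp
    rw [heq] at hlt
    have : |(2 * Complex.I + r / e).im| = 2 := by
      have : (r / e).im = 0 := by
        rcases he with rfl | rfl
        · simp [hr]
        · rw [show r / (-1 : ℂ) = -r by ring]
          simp [hr]
      simp [Complex.add_im, this]
    rw [this] at hlt
    linarith

end E2Amalgam

-- Layer 3: PA/PB closed under inverse, Lunit, mixed cases, main concrete lemma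
namespace E2Amalgam
open Matrix Complex

lemma PA.inv {u : GC} (h : PA u) : PA u⁻¹ := by
  obtain ⟨hint, hdet, hc⟩ := h
  have hadj : (u⁻¹ : GC).val = !![u.val 1 1, -u.val 0 1; -u.val 1 0, u.val 0 0] :=
    unit_inv_val_adj u hdet
  refine ⟨?_, ?_, ?_⟩
  · intro i j
    obtain ⟨n00, h00⟩ := hint 0 0
    obtain ⟨n01, h01⟩ := hint 0 1
    obtain ⟨n10, h10⟩ := hint 1 0
    obtain ⟨n11, h11⟩ := hint 1 1
    rw [hadj]
    fin_cases i <;> fin_cases j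
    · exact ⟨n11, by simp [h11]⟩
    · exact ⟨-n01, by simp [h01]⟩
    · exact ⟨-n10, by simp [h10]⟩
    · exact ⟨n00, by simp [h00]⟩
  · have h1 : (u⁻¹ : GC).val * u.val = 1 := by
      rw [← Units.val_mul, inv_mul_cancel, Units.val_one]
    have := congrArg Matrix.det h1
    rw [Matrix.det_mul, hdet, mul_one, Matrix.det_one] at this
    exact this
  · rw [hadj]
    have hentry : (!![u.val 1 1, -u.val 0 1; -u.val 1 0, u.val 0 0]) 1 0 = -u.val 1 0 := rfl
    rw [hentry]
    exact neg_ne_zero.2 hc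

lemma PB.det {u : GC} (h : PB u) : u.val.det = 1 := by
  obtain ⟨e, t, he, _, hval⟩ := h
  rw [hval, Matrix.det_fin_two_of]
  rcases he with rfl | rfl <;> ring

lemma PB.inv {u : GC} (h : PB u) : PB u⁻¹ := by
  obtain ⟨e, t, he, ht, hval⟩ := h
  have hdet : u.val.det = 1 := PB.det ⟨e, t, he, ht, hval⟩
  refine ⟨e, -t, he, by simpa using ht, ?_⟩
  rw [unit_inv_val_adj u hdet, hval]
  ext i j
  fin_cases i <;> fin_cases j <;> simp

def Lunit (s : ℂ) : GC where
  val := !![1, 0; s, 1]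
  inv := !![1, 0; -s, 1]
  val_inv := by
    ext i j
    fin_cases i <;> fin_cases j <;>
      simp [Matrix.mul_apply, Fin.sum_univ_two, Matrix.one_apply]
  inv_val := by
    ext i j
    fin_cases i <;> fin_cases j <;>
      simp [Matrix.mul_apply, Fin.sum_univ_two, Matrix.one_apply]

lemma Lunit_val (s : ℂ) : (Lunit s).val = !![1, 0; s, 1] := rfl

lemma Lunit_inv_val (s : ℂ) : ((Lunit s)⁻¹ : GC).val = !![1, 0; -s, 1] := rfl

lemma Lunit_int (s : ℤ) : IntMat (Lunit (s : ℂ)).val := by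
  intro i j
  rw [Lunit_val]
  fin_cases i <;> fin_cases j
  · exact ⟨1, by simp⟩
  · exact ⟨0, by simp⟩
  · exact ⟨s, by simp⟩
  · exact ⟨1, by simp⟩

lemma Lunit_inv_int (s : ℤ) : IntMat ((Lunit (s : ℂ))⁻¹ : GC).val := by
  intro i j
  rw [Lunit_inv_val]
  fin_cases i <;> fin_cases j
  · exact ⟨1, by simp⟩
  · exact ⟨0, by simp⟩
  · exact ⟨-s, by simp⟩
  · exact ⟨1, by simp⟩

lemma Lunit_det (s : ℂ) : (Lunit s).val.det = 1 := by
  rw [Lunit_val, Matrix.det_fin_two_of]; ring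

lemma Lunit_inv_det (s : ℂ) : ((Lunit s)⁻¹ : GC).val.det = 1 := by
  rw [Lunit_inv_val, Matrix.det_fin_two_of]; ring

lemma mixedTF : ∀ (p : Bool × GC) (LM : List (Bool × GC)),
    List.Chain' (fun a b => a.1 ≠ b.1) (p :: LM) →
    (∀ q ∈ p :: LM, TagOK q) →
    p.1 = true →
    ((p :: LM).getLast (by simp)).1 = false →
    ∀ c c₂ : GC, PC c → PC c₂ →
      c * ((p :: LM).map Prod.snd).prod * c₂ = 1 → False := by
  rintro ⟨b, u⟩ LM hchain hok hp hlast c c₂ hc hc₂ hrel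
  have hb : b = true := hp
  subst hb
  cases LM with
  | nil => simp at hlast
  | cons q LM₂ =>
    obtain ⟨b', u'⟩ := q
    have hb' : b' = false := by
      have hne : (true, u).1 ≠ (b', u').1 := (List.isChain_cons_cons.1 hchain).1
      cases b'
      · rfl
      · exact absurd rfl hne
    subst hb'
    -- the A-type letter data
    have hPAu : PA u := hok (true, u) (by simp)
    set M : Matrix (Fin 2) (Fin 2) ℂ := c.val * u.val with hM
    have hMint : IntMat M := IntMat.mul hc.1 hPAu.1
    have hMdet : M.det = 1 := by
      rw [hM, Matrix.det_mul, PC.det hc, hPAu.2.1, one_mul]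
    have hdet2 := Matrix.det_fin_two M
    rw [hMdet] at hdet2
    -- choose the shift s
    have hs : ∃ s : ℤ, (s : ℂ) ≠ 0 ∧ (s : ℂ) * M 0 0 + M 1 0 ≠ 0 := by
      by_cases hα : M 0 0 = 0
      · refine ⟨1, by norm_num, ?_⟩
        rw [hα]
        intro h0
        simp only [mul_zero, zero_add] at h0
        rw [hα, h0] at hdet2
        simp at hdet2
      · by_cases h1 : (1 : ℂ) * M 0 0 + M 1 0 ≠ 0
        · exact ⟨1, by norm_num, by push_cast; exact h1⟩
        · push_neg at h1
          refine ⟨2, by norm_num, ?_⟩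
          push_cast
          intro h2
          apply hα
          have hsub : (2 : ℂ) * M 0 0 + M 1 0 - ((1 : ℂ) * M 0 0 + M 1 0) = M 0 0 := by ring
          rw [h2, h1] at hsub
          simpa using hsub.symm
    obtain ⟨s, hs0, hsM⟩ := hs
    set Ls : GC := Lunit (s : ℂ) with hLs
    set x : Bool × GC := (true, Ls * c * u) with hx
    set y : Bool × GC := (true, c₂ * Ls⁻¹) with hy
    set LM₁ : List (Bool × GC) := (false, u') :: LM₂ with hLM₁
    -- tags of the new letters
    have hPAx : PA (Ls * c * u) := by
      refine ⟨?_, ?_, ?_⟩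
      · rw [Units.val_mul, Units.val_mul]
        exact IntMat.mul (IntMat.mul (Lunit_int s) hc.1) hPAu.1
      · rw [Units.val_mul, Units.val_mul, Matrix.det_mul, Matrix.det_mul,
          Lunit_det, PC.det hc, hPAu.2.1]
        norm_num
      · have hvm : (Ls * c * u).val = Ls.val * M := by
          rw [mul_assoc, Units.val_mul, Units.val_mul, hM]
        rw [hvm, Matrix.mul_apply, Fin.sum_univ_two, hLs, Lunit_val]
        simpa using hsM
    have hPAy : PA (c₂ * Ls⁻¹) := by
      obtain ⟨e₂, r₂, he₂, hr₂, h00₂, h01₂, h10₂, h11₂⟩ := PC.entries hc₂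
      refine ⟨?_, ?_, ?_⟩
      · rw [Units.val_mul]
        exact IntMat.mul hc₂.1 (Lunit_inv_int s)
      · rw [Units.val_mul, Matrix.det_mul, PC.det hc₂, Lunit_inv_det]
        norm_num
      · rw [Units.val_mul, Matrix.mul_apply, Fin.sum_univ_two, hLs, Lunit_inv_val]
        have e1 : (!![(1:ℂ), 0; -(s:ℂ), 1]) 0 0 = 1 := rfl
        have e2 : (!![(1:ℂ), 0; -(s:ℂ), 1]) 1 0 = -(s:ℂ) := rfl
        rw [e1, e2, h10₂, h11₂]
        have he₂0 : e₂ ≠ 0 := by rcases he₂ with rfl | rfl <;> norm_num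
        simp only [zero_mul, zero_add]
        exact mul_ne_zero he₂0 (neg_ne_zero.2 hs0)
    -- chain for the new word
    have htail := (List.isChain_cons_cons.1 hchain).2
    have hchainN : List.Chain' (fun a b => a.1 ≠ b.1) ((x :: LM₁) ++ [y]) := by
      apply List.IsChain.append
      · exact List.isChain_cons_cons.2 ⟨by simp [hx, hLM₁], htail⟩
      · exact List.isChain_singleton y
      · intro a ha b hb
        simp only [List.head?_cons, Option.mem_def, Option.some.injEq] at hb
        subst hb
        have hne : (x :: LM₁) ≠ [] := by simp
        rw [List.getLast?_eq_getLast hne, Option.mem_def, Option.some.injEq] at ha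
        subst ha
        have h1 : (x :: LM₁).getLast hne = LM₁.getLast (by simp [hLM₁]) :=
          List.getLast_cons (by simp [hLM₁])
        have h2 : LM₁.getLast (by simp [hLM₁])
            = (((true, u) :: LM₁).getLast (by simp)) :=
          (List.getLast_cons (by simp [hLM₁])).symm
        rw [h1, h2, hlast]
        simp [hy]
    have hokN : ∀ r ∈ (x :: LM₁) ++ [y], TagOK r := by
      intro r hr
      rcases List.mem_append.1 hr with hr | hr
      · rcases List.mem_cons.1 hr with rfl | hr
        · exact hPAx
        · exact hok r (List.mem_cons_of_mem _ hr)
      · rcases List.mem_singleton.1 hr with rfl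
        exact hPAy
    have hlq : (x :: (LM₁ ++ [y])).getLast? = some y := by
      rw [show x :: (LM₁ ++ [y]) = (x :: LM₁) ++ [y] from rfl]
      exact List.getLast?_concat
    have hgl := List.getLast?_eq_getLast (l := x :: (LM₁ ++ [y])) (by simp)
    rw [hlq] at hgl
    have hgl2 : (x :: (LM₁ ++ [y])).getLast (by simp) = y := (Option.some.inj hgl).symm
    have hpureN : ((x :: (LM₁ ++ [y])).getLast (by simp)).1 = x.1 := by
      rw [hgl2, hy, hx]
    -- the new relation
    have hrel' : c * (u * (LM₁.map Prod.snd).prod) * c₂ = 1 := by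
      simpa only [List.map_cons, List.prod_cons] using hrel
    have hrelN : (1 : GC) * (((x :: LM₁) ++ [y]).map Prod.snd).prod * 1 = 1 := by
      rw [one_mul, mul_one, List.map_append, List.prod_append, List.map_cons,
        List.prod_cons, List.map_singleton, List.prod_singleton]
      have key : Ls * (c * (u * (LM₁.map Prod.snd).prod) * c₂) * Ls⁻¹ = 1 := by
        rw [hrel', mul_one, mul_inv_cancel]
      have hx2 : x.2 = Ls * c * u := rfl
      have hy2 : y.2 = c₂ * Ls⁻¹ := rfl
      rw [hx2, hy2]
      calc Ls * c * u * (LM₁.map Prod.snd).prod * (c₂ * Ls⁻¹)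
          = Ls * (c * (u * (LM₁.map Prod.snd).prod) * c₂) * Ls⁻¹ := by
            simp only [mul_assoc]
        _ = 1 := key
    exact pureMain x (LM₁ ++ [y]) hchainN hokN hpureN 1 1 PC_one PC_one hrelN

lemma mixedFT (p : Bool × GC) (LM : List (Bool × GC))
    (hchain : List.Chain' (fun a b => a.1 ≠ b.1) (p :: LM))
    (hok : ∀ q ∈ p :: LM, TagOK q)
    (hp : p.1 = false)
    (hlast : (((p :: LM)).getLast (by simp)).1 = true)
    (c c₂ : GC) (hc : PC c) (hc₂ : PC c₂)
    (hrel : c * ((p :: LM).map Prod.snd).prod * c₂ = 1) : False := by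
  set f : Bool × GC → Bool × GC := fun r => (r.1, r.2⁻¹) with hf
  set N := ((p :: LM).reverse.map f) with hN
  have hNne : N ≠ [] := by simp [hN]
  have hchainN : List.Chain' (fun a b => a.1 ≠ b.1) N := by
    rw [hN]; show List.IsChain _ _; rw [List.isChain_map]
    have hflip : List.Chain' (flip fun a b : Bool × GC => a.1 ≠ b.1) (p :: LM) :=
      hchain.imp (fun a b h => Ne.symm h)
    rw [show (fun a b : Bool × GC => (f a).1 ≠ (f b).1) = (fun a b => a.1 ≠ b.1) from rfl]
    rw [List.isChain_reverse]
    exact hflip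
  have hokN : ∀ r ∈ N, TagOK r := by
    intro r hr
    rw [hN] at hr
    obtain ⟨a, ha, rfl⟩ := List.mem_map.1 hr
    rw [List.mem_reverse] at ha
    have := hok a ha
    obtain ⟨b, v⟩ := a
    cases b
    · exact PB.inv this
    · exact PA.inv this
  have hNrev : N.reverse = (p :: LM).map f := by
    rw [hN, ← List.map_reverse, List.reverse_reverse]
  have hheadN : N.head? = some (f ((p :: LM).getLast (by simp))) := by
    rw [hN, List.head?_map, List.head?_reverse,
      List.getLast?_eq_getLast (l := p :: LM) (by simp), Option.map_some]
  have hlastN : N.getLast? = some (f p) := by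
    rw [← List.head?_reverse, hNrev, List.map_cons, List.head?_cons]
  have hrelN : c₂⁻¹ * ((N.map Prod.snd).prod) * c⁻¹ = 1 := by
    have h1 : N.map Prod.snd = (((p :: LM).map Prod.snd).map (fun z : GC => z⁻¹)).reverse := by
      rw [hN, List.map_map, List.map_map, ← List.map_reverse]
      rfl
    have hP : (N.map Prod.snd).prod = (((p :: LM).map Prod.snd).prod)⁻¹ := by
      rw [h1, ← List.prod_inv_reverse]
    rw [hP]
    have := congrArg (fun z : GC => z⁻¹) hrel
    simpa [_root_.mul_inv_rev, mul_assoc] using this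
  cases hNc : N with
  | nil => exact hNne hNc
  | cons p' N' =>
    rw [hNc] at hheadN hlastN hchainN hokN hrelN
    simp only [List.head?_cons, Option.some.injEq] at hheadN
    have hp' : p'.1 = true := by
      rw [hheadN]
      exact hlast
    have hlast' : ((p' :: N').getLast (by simp)).1 = false := by
      rw [List.getLast?_eq_getLast (l := p' :: N') (by simp), Option.some.injEq] at hlastN
      rw [hlastN]
      exact hp
    exact mixedTF p' N' hchainN hokN hp' hlast' c₂⁻¹ c⁻¹ (PC.inv hc₂) (PC.inv hc) hrelN

lemma mainConcrete (p : Bool × GC) (LM : List (Bool × GC))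
    (hchain : List.Chain' (fun a b => a.1 ≠ b.1) (p :: LM))
    (hok : ∀ q ∈ p :: LM, TagOK q)
    (c c₂ : GC) (hc : PC c) (hc₂ : PC c₂)
    (hrel : c * ((p :: LM).map Prod.snd).prod * c₂ = 1) : False := by
  cases hp : p.1 <;> cases hl : ((p :: LM).getLast (by simp)).1
  · exact pureMain p LM hchain hok (by rw [hl, hp]) c c₂ hc hc₂ hrel
  · exact mixedFT p LM hchain hok hp hl c c₂ hc hc₂ hrel
  · exact mixedTF p LM hchain hok hp hl c c₂ hc hc₂ hrel
  · exact pureMain p LM hchain hok (by rw [hl, hp]) c c₂ hc hc₂ hrel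

end E2Amalgam

-- Layer 4: ring/group theoretic plumbing for E2, B2, B2'
namespace E2Amalgam
open Matrix

section RingLemmas
variable {R : Type*} [CommRing R]

lemma Em_val (x : R) : (Em R x).val = !![x, 1; -1, 0] := rfl

lemma Em_inv_val (x : R) : ((Em R x)⁻¹).val = !![0, -1; 1, x] := rfl

lemma E2_det {u : (Matrix (Fin 2) (Fin 2) R)ˣ} (hu : u ∈ E2 R) : u.val.det = 1 := by
  induction hu using Subgroup.closure_induction with
  | mem x hx =>
    obtain ⟨y, rfl⟩ := hx
    rw [Em_val, Matrix.det_fin_two_of]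
    ring_nf
  | one => simp
  | mul a b _ _ iha ihb => rw [Units.val_mul, Matrix.det_mul, iha, ihb, one_mul]
  | inv a _ ih =>
    have h1 : ((a⁻¹).val) * a.val = 1 := by rw [← Units.val_mul, inv_mul_cancel, Units.val_one]
    have h2 := congrArg Matrix.det h1
    rw [Matrix.det_mul, ih, mul_one, Matrix.det_one] at h2
    exact h2

lemma mem_B2_def {u : (Matrix (Fin 2) (Fin 2) R)ˣ} :
    u ∈ B2 R ↔ u.val 1 0 = 0 ∧ ((u⁻¹).val) 1 0 = 0 := Iff.rfl

lemma mem_B2_iff {u : (Matrix (Fin 2) (Fin 2) R)ˣ} (hdet : u.val.det = 1) :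
    u ∈ B2 R ↔ u.val 1 0 = 0 := by
  rw [mem_B2_def]
  constructor
  · exact fun h => h.1
  · intro h
    refine ⟨h, ?_⟩
    rw [unit_inv_val_adj u hdet]
    show -u.val 1 0 = 0
    rw [h, neg_zero]

lemma mem_B2'_iff {u : (Matrix (Fin 2) (Fin 2) R)ˣ} :
    u ∈ B2' R ↔ u ∈ E2 R ∧ u ∈ B2 R := Subgroup.mem_inf

lemma mem_B2'_of {u : (Matrix (Fin 2) (Fin 2) R)ˣ} (hu : u ∈ E2 R) (h : u.val 1 0 = 0) :
    u ∈ B2' R :=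
  mem_B2'_iff.2 ⟨hu, (mem_B2_iff (E2_det hu)).2 h⟩

lemma B2'_entries {u : (Matrix (Fin 2) (Fin 2) R)ˣ} (hu : u ∈ B2' R) :
    u.val 1 0 = 0 ∧ u.val 0 0 * u.val 1 1 = 1 := by
  obtain ⟨h1, h2⟩ := mem_B2'_iff.1 hu
  have hdet := E2_det h1
  have hc : u.val 1 0 = 0 := ((mem_B2_iff hdet).1 h2)
  refine ⟨hc, ?_⟩
  have hD := Matrix.det_fin_two u.val
  rw [hdet, hc, mul_zero, sub_zero] at hD
  exact hD.symm

/-- The unipotent element `U t = !![1, t; 0, 1]` as an element of `E₂(R)`. -/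
def Uu (R : Type*) [CommRing R] (t : R) : (Matrix (Fin 2) (Fin 2) R)ˣ :=
  Em R (-t) * (Em R 0)⁻¹

lemma Uu_val (t : R) : (Uu R t).val = !![1, t; 0, 1] := by
  rw [Uu, Units.val_mul, Em_inv_val, Em_val]
  ext i j
  fin_cases i <;> fin_cases j <;> simp [Matrix.mul_apply, Fin.sum_univ_two]

lemma Uu_mem (t : R) : Uu R t ∈ E2 R :=
  mul_mem (Subgroup.subset_closure ⟨-t, rfl⟩) (inv_mem (Subgroup.subset_closure ⟨0, rfl⟩))

/-- The element `-U t = !![-1, -t; 0, -1]` as an element of `E₂(R)`. -/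
def negUu (R : Type*) [CommRing R] (t : R) : (Matrix (Fin 2) (Fin 2) R)ˣ :=
  Em R 0 * Em R 0 * Uu R t

lemma negUu_val (t : R) : (negUu R t).val = !![-1, -t; 0, -1] := by
  rw [negUu, Units.val_mul, Units.val_mul, Uu_val, Em_val]
  ext i j
  fin_cases i <;> fin_cases j <;> simp [Matrix.mul_apply, Fin.sum_univ_two]

lemma negUu_mem (t : R) : negUu R t ∈ E2 R :=
  mul_mem (mul_mem (Subgroup.subset_closure ⟨0, rfl⟩) (Subgroup.subset_closure ⟨0, rfl⟩))
    (Uu_mem t)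

lemma Uu_mem_B2' (t : R) : Uu R t ∈ B2' R :=
  mem_B2'_of (Uu_mem t) (by rw [Uu_val]; rfl)

lemma negUu_mem_B2' (t : R) : negUu R t ∈ B2' R :=
  mem_B2'_of (negUu_mem t) (by rw [negUu_val]; rfl)

end RingLemmas

section units

lemma int_unit_eq {a b : ℤ} (h : a * b = 1) : (a = 1 ∧ b = 1) ∨ (a = -1 ∧ b = -1) :=
  Int.eq_one_or_neg_one_of_mul_eq_one' h

variable {d : ℤ}

lemma O_norm_nonneg (hd : 4 ≤ d) (α : Zsqrtd (-d)) : 0 ≤ α.norm := by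
  rw [Zsqrtd.norm_def]
  nlinarith [sq_nonneg α.re, sq_nonneg α.im, sq_nonneg (α.re * α.im)]

lemma O_unit_eq (hd : 4 ≤ d) {α β : Zsqrtd (-d)} (h : α * β = 1) :
    (α = 1 ∧ β = 1) ∨ (α = -1 ∧ β = -1) := by
  have hn := congrArg Zsqrtd.norm h
  rw [Zsqrtd.norm_mul] at hn
  have hn1 : (1 : Zsqrtd (-d)).norm = 1 := by simp [Zsqrtd.norm_def]
  rw [hn1] at hn
  have hα1 : α.norm = 1 := Int.eq_one_of_mul_eq_one_right (O_norm_nonneg hd α) hn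
  have hαd : α.re * α.re + d * (α.im * α.im) = 1 := by
    have := Zsqrtd.norm_def α
    rw [hα1] at this
    linarith [this]
  have him : α.im = 0 := by
    by_contra him
    have h1 : 1 ≤ |α.im| := Int.one_le_abs him
    have h2 : 1 ≤ α.im * α.im := by nlinarith [abs_nonneg α.im, sq_abs α.im]
    nlinarith [sq_nonneg α.re]
  have hre : α.re * α.re = 1 := by
    rw [him] at hαd
    linarith
  have hβ : β = α * β * α - α * α * β + β := by ring
  rcases int_unit_eq hre with ⟨h1, -⟩ | ⟨h1, -⟩
  · left
    have hα : α = 1 := by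
      ext
      · simpa using h1
      · simpa using him
    constructor
    · exact hα
    · rw [hα, one_mul] at h
      exact h
  · right
    have hα : α = -1 := by
      ext
      · simpa using h1
      · simpa using him
    constructor
    · exact hα
    · rw [hα] at h
      have : β = -1 * (-1 * β) := by ring
      rw [this, h]
      ring

lemma B2'O_form (hd : 4 ≤ d) {u : (Matrix (Fin 2) (Fin 2) (Zsqrtd (-d)))ˣ}
    (hu : u ∈ B2' (Zsqrtd (-d))) :
    u.val = !![1, u.val 0 1; 0, 1] ∨ u.val = !![-1, u.val 0 1; 0, -1] := by
  obtain ⟨hc, hdiag⟩ := B2'_entries hu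
  rcases O_unit_eq hd hdiag with ⟨h1, h2⟩ | ⟨h1, h2⟩
  · left
    conv_lhs => rw [Matrix.eta_fin_two u.val]
    rw [h1, h2, hc]
  · right
    conv_lhs => rw [Matrix.eta_fin_two u.val]
    rw [h1, h2, hc]

lemma B2'Z_form {u : (Matrix (Fin 2) (Fin 2) ℤ)ˣ} (hu : u ∈ B2' ℤ) :
    u.val = !![1, u.val 0 1; 0, 1] ∨ u.val = !![-1, u.val 0 1; 0, -1] := by
  obtain ⟨hc, hdiag⟩ := B2'_entries hu
  rcases int_unit_eq hdiag with ⟨h1, h2⟩ | ⟨h1, h2⟩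
  · left
    conv_lhs => rw [Matrix.eta_fin_two u.val]
    rw [h1, h2, hc]
  · right
    conv_lhs => rw [Matrix.eta_fin_two u.val]
    rw [h1, h2, hc]

end units

section maps

/-- Functoriality of the matrix unit group in the ring. -/
def mmapU {R S : Type*} [CommRing R] [CommRing S] (σ : R →+* S) :
    (Matrix (Fin 2) (Fin 2) R)ˣ →* (Matrix (Fin 2) (Fin 2) S)ˣ :=
  Units.map (σ.mapMatrix : Matrix (Fin 2) (Fin 2) R →+* Matrix (Fin 2) (Fin 2) S).toMonoidHom

variable {R S : Type*} [CommRing R] [CommRing S]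

lemma mmapU_val (σ : R →+* S) (u : (Matrix (Fin 2) (Fin 2) R)ˣ) :
    (mmapU σ u).val = u.val.map σ := rfl

lemma mmapU_Em (σ : R →+* S) (x : R) : mmapU σ (Em R x) = Em S (σ x) := by
  apply Units.ext
  rw [mmapU_val, Em_val, Em_val]
  ext i j
  fin_cases i <;> fin_cases j <;> simp [Matrix.map_apply]

lemma mmapU_E2 (σ : R →+* S) {u : (Matrix (Fin 2) (Fin 2) R)ˣ} (hu : u ∈ E2 R) :
    mmapU σ u ∈ E2 S := by
  have hle : E2 R ≤ Subgroup.comap (mmapU σ) (E2 S) := by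
    apply Subgroup.closure_le _ |>.2
    rintro _ ⟨x, rfl⟩
    show mmapU σ (Em R x) ∈ E2 S
    rw [mmapU_Em]
    exact Subgroup.subset_closure ⟨σ x, rfl⟩
  exact hle hu

lemma mmapU_B2' (σ : R →+* S) {u : (Matrix (Fin 2) (Fin 2) R)ˣ} (hu : u ∈ B2' R) :
    mmapU σ u ∈ B2' S := by
  apply mem_B2'_of (mmapU_E2 σ (mem_B2'_iff.1 hu).1)
  rw [mmapU_val, Matrix.map_apply, (B2'_entries hu).1, map_zero]

lemma mmapU_inj {σ : R →+* S} (hσ : Function.Injective σ) :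
    Function.Injective (mmapU σ) := by
  intro u v h
  apply Units.ext
  have hval := congrArg Units.val h
  rw [mmapU_val, mmapU_val] at hval
  ext i j
  apply hσ
  have h1 : (u.val.map σ) i j = (v.val.map σ) i j := by rw [hval]
  simpa [Matrix.map_apply] using h1

end maps

end E2Amalgam

-- Layer 5: the specific maps for O = Z[sqrt(-d)] and the final assembly
namespace E2Amalgam
open Matrix Complex

section final
variable (d : ℤ)

def castO : ℤ →+* Zsqrtd (-d) := Int.castRingHom _

lemma map_of_two {R S : Type*} (f : R → S) (a b c e : R) :
    (!![a, b; c, e]).map f = !![f a, f b; f c, f e] := by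
  ext i j
  fin_cases i <;> fin_cases j <;> simp [Matrix.map_apply]

lemma matrix_eq_of_entries {R : Type*} (A B : Matrix (Fin 2) (Fin 2) R)
    (h00 : A 0 0 = B 0 0) (h01 : A 0 1 = B 0 1) (h10 : A 1 0 = B 1 0)
    (h11 : A 1 1 = B 1 1) : A = B := by
  rw [Matrix.eta_fin_two A, Matrix.eta_fin_two B, h00, h01, h10, h11]

lemma castO_inj : Function.Injective (castO d) := by
  intro a b h
  have h1 := congrArg Zsqrtd.re h
  simpa [castO] using h1

def gmap : ↥(B2' ℤ) →* ↥(B2' (Zsqrtd (-d))) :=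
  MonoidHom.codRestrict ((mmapU (castO d)).comp (B2' ℤ).subtype) _
    (fun x => mmapU_B2' (castO d) x.2)

lemma gmap_inj : Function.Injective (gmap d) := by
  intro u v h
  apply Subtype.ext
  apply mmapU_inj (castO_inj d)
  exact congrArg Subtype.val h

def fA : ↥(E2 ℤ) →* ↥(E2 (Zsqrtd (-d))) :=
  MonoidHom.codRestrict ((mmapU (castO d)).comp (E2 ℤ).subtype) _
    (fun x => mmapU_E2 (castO d) x.2)

lemma fA_inj : Function.Injective (fA d) := by
  intro u v h
  apply Subtype.ext
  apply mmapU_inj (castO_inj d)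
  exact congrArg Subtype.val h

def fB : ↥(B2' (Zsqrtd (-d))) →* ↥(E2 (Zsqrtd (-d))) :=
  Subgroup.inclusion inf_le_left

def kH : ↥(B2' ℤ) →* ↥(E2 (Zsqrtd (-d))) := (fA d).comp inclB2'

lemma kH_inj : Function.Injective (kH d) := by
  intro a b hh
  have h1 : (kH d a).val = (kH d b).val := congrArg Subtype.val hh
  have h2 : mmapU (castO d) a.val = mmapU (castO d) b.val := h1
  have h3 := mmapU_inj (castO_inj d) h2
  exact Subtype.ext h3

def Ffam : ∀ b : Bool, boolFam (↥(E2 ℤ)) (↥(B2' (Zsqrtd (-d)))) b →* ↥(E2 (Zsqrtd (-d)))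
  | true => fA d
  | false => fB d

lemma Fcomm : ∀ i, (Ffam d i).comp (boolHoms inclB2' (gmap d) i) = kH d := by
  intro i
  cases i
  · apply MonoidHom.ext
    intro u
    rfl
  · rfl

lemma hinjφ : ∀ i, Function.Injective (boolHoms inclB2' (gmap d) i) := by
  intro i
  cases i
  · exact gmap_inj d
  · intro a b hh
    have hh2 : inclB2' a = inclB2' b := hh
    have h2 : (inclB2' a).val = (inclB2' b).val := congrArg Subtype.val hh2
    exact Subtype.ext h2

def Φm : Monoid.PushoutI (boolHoms inclB2' (gmap d)) →* ↥(E2 (Zsqrtd (-d))) :=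
  Monoid.PushoutI.lift (Ffam d) (kH d) (Fcomm d)

-- the complex embedding

lemma d_nonneg (hd : 4 ≤ d) : (0 : ℝ) ≤ (d : ℝ) := by
  have : (0:ℤ) ≤ d := by linarith
  exact_mod_cast this

lemma sqrt_ge_two (hd : 4 ≤ d) : 2 ≤ Real.sqrt (d : ℝ) := by
  have h4 : (2:ℝ) = Real.sqrt 4 := by
    rw [show (4:ℝ) = 2^2 by norm_num, Real.sqrt_sq (by norm_num : (0:ℝ) ≤ 2)]
  rw [h4]
  apply Real.sqrt_le_sqrt
  exact_mod_cast hd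

def ψO (hd : 4 ≤ d) : Zsqrtd (-d) →+* ℂ :=
  Zsqrtd.lift ⟨(Real.sqrt (d : ℝ) : ℂ) * Complex.I, by
    have h1 : (Real.sqrt (d:ℝ) : ℂ) * (Real.sqrt (d:ℝ) : ℂ) = ((d:ℝ) : ℂ) := by
      rw [← Complex.ofReal_mul, Real.mul_self_sqrt (d_nonneg d hd)]
    calc ((Real.sqrt (d:ℝ) : ℂ) * Complex.I) * ((Real.sqrt (d:ℝ) : ℂ) * Complex.I)
        = ((Real.sqrt (d:ℝ) : ℂ) * (Real.sqrt (d:ℝ) : ℂ)) * (Complex.I * Complex.I) := by ring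
      _ = ((d:ℝ):ℂ) * (-1) := by rw [h1, Complex.I_mul_I]
      _ = ((-d : ℤ) : ℂ) := by push_cast; ring⟩

lemma ψO_apply (hd : 4 ≤ d) (z : Zsqrtd (-d)) :
    ψO d hd z = (z.re : ℂ) + (z.im : ℂ) * ((Real.sqrt (d : ℝ) : ℂ) * Complex.I) := rfl

lemma ψO_im (hd : 4 ≤ d) (z : Zsqrtd (-d)) : (ψO d hd z).im = (z.im : ℝ) * Real.sqrt (d:ℝ) := by
  rw [ψO_apply]
  simp

lemma ψO_int (hd : 4 ≤ d) (n : ℤ) : ψO d hd ((n : ℤ) : Zsqrtd (-d)) = (n : ℂ) := map_intCast _ n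

def ΨE (hd : 4 ≤ d) : ↥(E2 (Zsqrtd (-d))) →* GC :=
  (mmapU (ψO d hd)).comp (E2 (Zsqrtd (-d))).subtype

lemma ΨE_fA_val (hd : 4 ≤ d) (a : ↥(E2 ℤ)) :
    (ΨE d hd (fA d a)).val = a.val.val.map (fun n : ℤ => (n : ℂ)) := by
  rw [show (ΨE d hd (fA d a)).val = (a.val.val.map (castO d)).map (ψO d hd) from rfl,
    Matrix.map_map]
  apply matrix_eq_of_entries <;>
    · simp only [Matrix.map_apply, Function.comp_apply]
      exact ψO_int d hd _

lemma IntMat_cast (m : Matrix (Fin 2) (Fin 2) ℤ) :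
    IntMat (m.map (fun n : ℤ => (n : ℂ))) := fun i j => ⟨m i j, by rw [Matrix.map_apply]⟩

lemma det_cast (m : Matrix (Fin 2) (Fin 2) ℤ) :
    (m.map (fun n : ℤ => (n : ℂ))).det = ((m.det : ℤ) : ℂ) := by
  rw [show m.map (fun n : ℤ => (n : ℂ)) = (Int.castRingHom ℂ).mapMatrix m from rfl]
  rw [← RingHom.map_det]
  rfl

-- the A-type letters
lemma PA_of_A (hd : 4 ≤ d) (a : ↥(E2 ℤ)) (hnr : ¬ ∃ c : ↥(B2' ℤ), inclB2' c = a) :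
    PA (ΨE d hd (fA d a)) := by
  refine ⟨?_, ?_, ?_⟩
  · rw [ΨE_fA_val]
    exact IntMat_cast _
  · rw [ΨE_fA_val, det_cast, E2_det a.2]
    norm_num
  · rw [ΨE_fA_val, Matrix.map_apply]
    intro h0
    have hz : a.val.val 1 0 = 0 := by exact_mod_cast h0
    apply hnr
    exact ⟨⟨a.val, mem_B2'_of a.2 hz⟩, Subtype.ext rfl⟩

-- the B-type letters
lemma PB_of_B (hd : 4 ≤ d) (b : ↥(B2' (Zsqrtd (-d)))) (hnr : ¬ ∃ c : ↥(B2' ℤ), gmap d c = b) :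
    PB (ΨE d hd (fB d b)) := by
  have hform := B2'O_form hd b.2
  set t : Zsqrtd (-d) := b.val.val 0 1 with ht
  have hΨval : (ΨE d hd (fB d b)).val = b.val.val.map (ψO d hd) := rfl
  have htim : t.im ≠ 0 := by
    intro h0
    apply hnr
    have hcast : castO d t.re = t := by
      have hcast0 : ((t.re : ℤ) : Zsqrtd (-d)) = t := by
        ext
        · simp
        · simp [h0.symm]
      exact hcast0
    rcases hform with hf | hf
    · refine ⟨⟨Uu ℤ t.re, Uu_mem_B2' t.re⟩, ?_⟩
      apply Subtype.ext
      apply Units.ext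
      show (Uu ℤ t.re).val.map (castO d) = b.val.val
      rw [Uu_val, hf, map_of_two, _root_.map_one, _root_.map_zero, hcast]
    · refine ⟨⟨negUu ℤ (-t.re), negUu_mem_B2' (-t.re)⟩, ?_⟩
      apply Subtype.ext
      apply Units.ext
      show (negUu ℤ (-t.re)).val.map (castO d) = b.val.val
      rw [negUu_val, hf, neg_neg, map_of_two, _root_.map_neg, _root_.map_one, _root_.map_zero, hcast]
  have him2 : 2 ≤ |(ψO d hd t).im| := by
    rw [ψO_im, abs_mul]
    have h1 : (1:ℝ) ≤ |(t.im : ℝ)| := by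
      have := Int.one_le_abs htim
      exact_mod_cast this
    have h2 : |Real.sqrt (d:ℝ)| = Real.sqrt (d:ℝ) := abs_of_nonneg (Real.sqrt_nonneg _)
    rw [h2]
    nlinarith [sqrt_ge_two d hd]
  rcases hform with hf | hf
  · refine ⟨1, ψO d hd t, Or.inl rfl, him2, ?_⟩
    rw [hΨval, hf, map_of_two, _root_.map_one, _root_.map_zero]
  · refine ⟨-1, ψO d hd t, Or.inr rfl, him2, ?_⟩
    rw [hΨval, hf, map_of_two, _root_.map_neg, _root_.map_one, _root_.map_zero]

-- the C-type letters
lemma PC_of_C (hd : 4 ≤ d) (h : ↥(B2' ℤ)) : PC (ΨE d hd (kH d h)) := by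
  have hform := B2'Z_form h.2
  have hval : (ΨE d hd (kH d h)).val = h.val.val.map (fun n : ℤ => (n : ℂ)) :=
    ΨE_fA_val d hd (inclB2' h)
  refine ⟨hval ▸ IntMat_cast _, ?_⟩
  rcases hform with hf | hf
  · refine ⟨1, ((h.val.val 0 1 : ℤ) : ℂ), Or.inl rfl, by simp, ?_⟩
    rw [hval, hf, map_of_two]
    norm_num
  · refine ⟨-1, ((h.val.val 0 1 : ℤ) : ℂ), Or.inr rfl, by simp, ?_⟩
    rw [hval, hf, map_of_two]
    norm_num

-- surjectivity
lemma Φm_surj : Function.Surjective (Φm d) := by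
  intro y
  have hy : y.val ∈ Subgroup.map (E2 (Zsqrtd (-d))).subtype (Φm d).range := by
    have hle : E2 (Zsqrtd (-d)) ≤ Subgroup.map (E2 (Zsqrtd (-d))).subtype (Φm d).range := by
      apply (Subgroup.closure_le _).2
      rintro _ ⟨x, rfl⟩
      have hsplit : Em (Zsqrtd (-d)) x = Uu (Zsqrtd (-d)) (-x) * Em (Zsqrtd (-d)) 0 := by
        apply Units.ext
        rw [Units.val_mul, Uu_val, Em_val, Em_val]
        apply matrix_eq_of_entries <;>
          simp [Matrix.mul_apply, Fin.sum_univ_two]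
      rw [hsplit]
      apply mul_mem
      · refine ⟨Φm d (Monoid.PushoutI.of (φ := boolHoms inclB2' (gmap d)) false
          ⟨Uu (Zsqrtd (-d)) (-x), Uu_mem_B2' (-x)⟩), ⟨_, rfl⟩, ?_⟩
        rw [Φm]
        exact congrArg Subtype.val (Monoid.PushoutI.lift_of (Ffam d) (kH d) (Fcomm d) _)
      · refine ⟨Φm d (Monoid.PushoutI.of (φ := boolHoms inclB2' (gmap d)) true
          ⟨Em ℤ 0, Subgroup.subset_closure ⟨0, rfl⟩⟩), ⟨_, rfl⟩, ?_⟩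
        rw [Φm]
        refine (congrArg Subtype.val (Monoid.PushoutI.lift_of (Ffam d) (kH d) (Fcomm d) (i := true)
          ⟨Em ℤ 0, Subgroup.subset_closure ⟨0, rfl⟩⟩)).trans ?_
        show ((fA d) ⟨Em ℤ 0, _⟩).val = Em (Zsqrtd (-d)) 0
        show mmapU (castO d) (Em ℤ 0) = Em (Zsqrtd (-d)) 0
        rw [mmapU_Em, _root_.map_zero]
    exact hle y.2
  obtain ⟨z, hzr, hz⟩ := hy
  obtain ⟨wpre, hw⟩ := hzr
  refine ⟨wpre, ?_⟩
  apply Subtype.ext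
  rw [show ((Φm d wpre : ↥(E2 (Zsqrtd (-d))))).val = ((E2 (Zsqrtd (-d))).subtype) (Φm d wpre)
    from rfl]
  rw [hw]
  exact hz

-- letters of a normal word are not in the range of the base maps
lemma not_in_range_of_transversal {ι : Type} {G : ι → Type} [∀ i, Group (G i)]
    {H : Type} [Group H] {φ : ∀ i, H →* G i} (T : Monoid.PushoutI.NormalWord.Transversal φ)
    {i : ι} {gi : G i} (hset : gi ∈ T.set i) (hne : gi ≠ 1) : gi ∉ (φ i).range := by
  intro hr
  obtain ⟨q, hq, huniq⟩ := (T.compl i).existsUnique gi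
  have h1 := huniq ⟨⟨gi, hr⟩, ⟨1, T.one_mem i⟩⟩ (by simp)
  have h2 := huniq ⟨⟨1, (φ i).range.one_mem⟩, ⟨gi, hset⟩⟩ (by simp)
  apply hne
  have h3 := h1.trans h2.symm
  have h4 := congrArg (fun z => (z.2 : G i)) h3
  simpa using h4.symm

-- injectivity
lemma Φm_inj (hd : 4 ≤ d) : Function.Injective (Φm d) := by
  rw [injective_iff_map_eq_one]
  intro x hx
  classical
  obtain ⟨T⟩ := Monoid.PushoutI.NormalWord.transversal_nonempty (boolHoms inclB2' (gmap d)) (hinjφ d)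
  set w := (Monoid.PushoutI.NormalWord.equiv (d := T)) x with hwdef
  have hxw : Monoid.PushoutI.NormalWord.prod w = x :=
    (Monoid.PushoutI.NormalWord.equiv (d := T)).left_inv x
  have hx3 : x = Monoid.PushoutI.base (boolHoms inclB2' (gmap d)) w.head *
      Monoid.PushoutI.ofCoprodI (w.toWord.prod) := by
    rw [← hxw]
    rfl
  cases hl : w.toWord.toList with
  | nil =>
    have hword : w.toWord.prod = 1 := by
      show List.prod (w.toWord.toList.map fun l => Monoid.CoprodI.of l.snd) = 1
      rw [hl]
      simp
    have hx2 : x = Monoid.PushoutI.base (boolHoms inclB2' (gmap d)) w.head := by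
      rw [hx3, hword, _root_.map_one, mul_one]
    rw [hx2, Φm, Monoid.PushoutI.lift_base] at hx
    have hh : w.head = 1 := by
      apply kH_inj d
      rw [hx, _root_.map_one]
    rw [hx2, hh, _root_.map_one]
  | cons p l' =>
    exfalso
    -- the concrete list of letters
    have hmem : ∀ q ∈ p :: l', q.2 ∉ (boolHoms inclB2' (gmap d) q.1).range := by
      intro q hq
      have hset : q.2 ∈ T.set q.1 := w.normalized q.1 q.2 (by rw [hl]; exact hq)
      have hne : q.2 ≠ 1 := w.toWord.ne_one q (by rw [hl]; exact hq)
      exact not_in_range_of_transversal T hset hne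
    -- the relation in GC
    have h1 : Φm d x = kH d w.head *
        ((p :: l').map (fun q => Ffam d q.1 q.2)).prod := by
      rw [hx3, _root_.map_mul, Φm, Monoid.PushoutI.lift_base]
      congr 1
      show (Monoid.PushoutI.lift (Ffam d) (kH d) (Fcomm d)).comp
          Monoid.PushoutI.ofCoprodI
          (List.prod (w.toWord.toList.map fun l => Monoid.CoprodI.of l.snd)) = _
      rw [hl, map_list_prod, List.map_map]
      congr 1
    have h2 : ΨE d hd (Φm d x) = 1 := by rw [hx, _root_.map_one]
    rw [h1, _root_.map_mul, map_list_prod, List.map_map] at h2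
    -- package as the concrete main lemma input
    set F2 : (Σ i : Bool, boolFam (↥(E2 ℤ)) (↥(B2' (Zsqrtd (-d)))) i) → Bool × GC :=
      fun q => (q.1, ΨE d hd (Ffam d q.1 q.2)) with hF2
    have hsnd : ((p :: l').map F2).map Prod.snd
        = (p :: l').map ((ΨE d hd) ∘ fun q => Ffam d q.1 q.2) := by
      rw [List.map_map]
      rfl
    have hrel : (ΨE d hd (kH d w.head)) * (((F2 p :: l'.map F2)).map Prod.snd).prod * 1 = 1 := by
      rw [mul_one]
      rw [show F2 p :: l'.map F2 = (p :: l').map F2 from rfl, hsnd]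
      exact h2
    have hchainw : (p :: l').Chain' (fun a b => a.1 ≠ b.1) := by
      have := w.toWord.chain_ne
      rw [hl] at this
      exact this
    have hchain : List.Chain' (fun a b => a.1 ≠ b.1) (F2 p :: l'.map F2) := by
      rw [show F2 p :: l'.map F2 = (p :: l').map F2 from rfl]
      exact (List.isChain_map F2).2 hchainw
    have hok : ∀ r ∈ F2 p :: l'.map F2, TagOK r := by
      intro r hr
      rw [show F2 p :: l'.map F2 = (p :: l').map F2 from rfl] at hr
      obtain ⟨q, hq, rfl⟩ := List.mem_map.1 hr
      have hnr := hmem q hq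
      obtain ⟨i, gi⟩ := q
      cases i
      · show PB (ΨE d hd (fB d gi))
        apply PB_of_B d hd gi
        intro ⟨c, hc⟩
        exact hnr ⟨c, hc⟩
      · show PA (ΨE d hd (fA d gi))
        apply PA_of_A d hd gi
        intro ⟨c, hc⟩
        exact hnr ⟨c, hc⟩
    exact mainConcrete (F2 p) (l'.map F2) hchain hok
      (ΨE d hd (kH d w.head)) 1 (PC_of_C d hd w.head) PC_one hrel

-- non-surjectivity of the two inclusions
lemma inclB2'_not_surj : ¬ Function.Surjective inclB2' := by
  intro hs
  obtain ⟨c, hc⟩ := hs ⟨Em ℤ 0, Subgroup.subset_closure ⟨0, rfl⟩⟩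
  have h1 : Em ℤ 0 ∈ B2' ℤ := by
    have h2 : c.val = Em ℤ 0 := congrArg Subtype.val hc
    rw [← h2]
    exact c.2
  have h3 := (B2'_entries h1).1
  rw [show (Em ℤ 0).val 1 0 = -1 from rfl] at h3
  norm_num at h3

lemma gmap_not_surj : ¬ Function.Surjective (gmap d) := by
  intro hs
  obtain ⟨c, hc⟩ := hs ⟨Uu (Zsqrtd (-d)) (Zsqrtd.sqrtd), Uu_mem_B2' _⟩
  have h1 := congrArg (fun z : ↥(B2' (Zsqrtd (-d))) => z.val.val 0 1) hc
  simp only [] at h1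
  have hL : (gmap d c).val.val 0 1 = castO d (c.val.val 0 1) := rfl
  have hR : (⟨Uu (Zsqrtd (-d)) Zsqrtd.sqrtd, Uu_mem_B2' _⟩ :
      ↥(B2' (Zsqrtd (-d)))).val.val 0 1 = Zsqrtd.sqrtd := by
    show (Uu (Zsqrtd (-d)) Zsqrtd.sqrtd).val 0 1 = Zsqrtd.sqrtd
    rw [Uu_val]
    rfl
  rw [hL, hR] at h1
  have h2 := congrArg Zsqrtd.im h1
  simp [castO, Zsqrtd.sqrtd] at h2

end final
end E2Amalgam

/-- For an integer `d ≥ 4` and `𝒪 = ℤ[√-d]`, one has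
`E₂(𝒪) ≅ E₂(ℤ) ∗_{B₂'(ℤ)} B₂'(𝒪)` – a nontrivial amalgamated product – where the two maps
from `B₂'(ℤ)` are the natural inclusions (the one into `B₂'(𝒪)` being induced by the
coefficient ring embedding `ℤ → 𝒪`). -/
theorem E2_Zsqrtd_amalgam (d : ℤ) (hd : 4 ≤ d) :
    ∃ g : ↥(B2' ℤ) →* ↥(B2' (Zsqrtd (-d))),
      (∀ u : ↥(B2' ℤ), (g u).val.val =
        (Int.castRingHom (Zsqrtd (-d))).mapMatrix u.val.val) ∧
      Function.Injective inclB2' ∧ Function.Injective g ∧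
      ¬ Function.Surjective inclB2' ∧ ¬ Function.Surjective g ∧
      Nonempty (↥(E2 (Zsqrtd (-d))) ≃* Monoid.PushoutI (boolHoms inclB2' g)) := by
  refine ⟨E2Amalgam.gmap d, fun u => rfl, ?_, E2Amalgam.gmap_inj d,
    E2Amalgam.inclB2'_not_surj, E2Amalgam.gmap_not_surj d, ?_⟩
  · intro a b hh
    have h2 : (inclB2' a).val = (inclB2' b).val := congrArg Subtype.val hh
    exact Subtype.ext h2
  · exact ⟨(MulEquiv.ofBijective (E2Amalgam.Φm d)
      ⟨E2Amalgam.Φm_inj d hd, E2Amalgam.Φm_surj d⟩).symm⟩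
end
end
end

section
/- The group E₂(Γ₂(ℤ)) is isomorphic to SL₂(ℤ[i]), the group of 2×2 matrices of determinant 1 over the Gaussian integers. -/
noncomputable section

open CliffordAlgebra

namespace E2Aux

/-! ### The ring isomorphism `Cl 2 ≃+* ℤ[i]` -/

def fLin : (Fin (2-1) → ℤ) →ₗ[ℤ] GaussianInt where
  toFun v := ⟨0, v 0⟩
  map_add' a b := by ext <;> simp
  map_smul' m a := by ext <;> simp

lemma fLin_cond (v : Fin (2-1) → ℤ) : fLin v * fLin v = algebraMap ℤ GaussianInt (Qf 2 v) := by
  have : Qf 2 v = -(v 0 * v 0) := by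
    simp [Qf, QuadraticMap.weightedSumSquares_apply, Fin.sum_univ_one]
  rw [this]
  ext <;> simp [fLin, Zsqrtd.re_mul, Zsqrtd.im_mul]

def phi : Cl 2 →ₐ[ℤ] GaussianInt := CliffordAlgebra.lift (Qf 2) ⟨fLin, fLin_cond⟩

def psi (z : GaussianInt) : Cl 2 := algebraMap ℤ (Cl 2) z.re + z.im • iGen 2 0

lemma psi_eq (z : GaussianInt) : psi z = (z.re : Cl 2) + (z.im : Cl 2) * iGen 2 0 := by
  rw [psi, eq_intCast (algebraMap ℤ (Cl 2)), zsmul_eq_mul]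

lemma psi_add (z w : GaussianInt) : psi (z + w) = psi z + psi w := by
  simp only [psi_eq, Zsqrtd.re_add, Zsqrtd.im_add]
  push_cast
  noncomm_ring

lemma key (p q r s : ℤ) (I : Cl 2) (hI : I * I = -1) :
    ((p*r + -1*q*s : ℤ) : Cl 2) + ((p*s + q*r : ℤ) : Cl 2) * I
      = ((p : Cl 2) + (q : Cl 2) * I) * ((r : Cl 2) + (s : Cl 2) * I) := by
  have c1 : ∀ (n : ℤ) (x : Cl 2), x * (n : Cl 2) = (n : Cl 2) * x :=
    fun n x => (Int.cast_commute n x).symm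
  push_cast
  simp only [mul_add, add_mul]
  rw [show ((q:Cl 2)*I)*((s:Cl 2)*I) = ((q:Cl 2)*(s:Cl 2))*(I*I) by
    rw [mul_assoc, ← mul_assoc I, c1 s I, mul_assoc, ← mul_assoc], hI]
  rw [show ((q:Cl 2)*I)*(r:Cl 2) = ((q:Cl 2)*(r:Cl 2))*I by
    rw [mul_assoc, c1 r I, ← mul_assoc]]
  noncomm_ring

lemma psi_mul (z w : GaussianInt) : psi (z * w) = psi z * psi w := by
  simp only [psi_eq, Zsqrtd.re_mul, Zsqrtd.im_mul]
  exact key z.re z.im w.re w.im _ (iGen_sq 2 0)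

lemma left_inv (x : Cl 2) : psi (phi x) = x := by
  induction x using CliffordAlgebra.induction with
  | algebraMap r =>
      rw [show phi (algebraMap ℤ (Cl 2) r) = algebraMap ℤ GaussianInt r from AlgHom.commutes _ r]
      simp [psi_eq]
  | ι v =>
      rw [show phi (ι (Qf 2) v) = fLin v from CliffordAlgebra.lift_ι_apply _ _ v]
      have hv : v = v 0 • Pi.single (0 : Fin (2-1)) 1 := by
        funext j
        have : j = 0 := Fin.ext (by omega)
        subst this
        simp
      rw [show (fLin v : GaussianInt) = ⟨0, v 0⟩ from rfl]
      rw [psi_eq]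
      show (0:ℤ) + (v 0 : Cl 2) * iGen 2 0 = ι (Qf 2) v
      rw [iGen]
      rw [show ((v 0 : ℤ) : Cl 2) * (ι (Qf 2)) (Pi.single 0 1)
            = (v 0) • (ι (Qf 2)) (Pi.single 0 1) from (zsmul_eq_mul _ _).symm]
      rw [← map_smul, ← hv]
      simp
  | mul a b ha hb => rw [map_mul, psi_mul, ha, hb]
  | add a b ha hb => rw [map_add, psi_add, ha, hb]

lemma right_inv (z : GaussianInt) : phi (psi z) = z := by
  rw [psi]
  rw [map_add, AlgHom.commutes, map_zsmul]
  rw [show phi (iGen 2 0) = fLin (Pi.single 0 1) from CliffordAlgebra.lift_ι_apply _ _ _]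
  ext <;> simp [fLin]

/-- The ring isomorphism `Cl 2 ≃+* ℤ[i]`. -/
def e : Cl 2 ≃+* GaussianInt :=
  RingEquiv.ofBijective (phi.toRingHom)
    ⟨Function.LeftInverse.injective left_inv, fun z => ⟨psi z, right_inv z⟩⟩

lemma e_apply (x : Cl 2) : e x = phi x := rfl

lemma Vn_two_eq_top : Vn 2 = ⊤ := by
  rw [eq_top_iff]
  intro x _
  have hx : x = psi (phi x) := (left_inv x).symm
  rw [hx, psi]
  apply Submodule.add_mem
  · rw [Algebra.algebraMap_eq_smul_one]
    exact Submodule.smul_mem _ _ (Submodule.subset_span (Set.mem_insert _ _))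
  · exact Submodule.smul_mem _ _ (Submodule.subset_span (Set.mem_insert_of_mem _ ⟨0, rfl⟩))

/-! ### `SL₂(ℤ[i])` is generated by the elementary matrices `E(z)` -/

open Matrix

abbrev SL2 := Matrix.SpecialLinearGroup (Fin 2) GaussianInt

def Ep (z : GaussianInt) : SL2 := ⟨!![z, 1; -1, 0], by simp [Matrix.det_fin_two_of]⟩

def Hsub : Subgroup SL2 := Subgroup.closure (Set.range Ep)

def Usl (a : GaussianInt) : SL2 := ⟨!![1, a; 0, 1], by simp [Matrix.det_fin_two_of]⟩
def Lsl (a : GaussianInt) : SL2 := ⟨!![1, 0; a, 1], by simp [Matrix.det_fin_two_of]⟩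
abbrev Ssl : SL2 := Ep 0

lemma Ep_mem (z : GaussianInt) : Ep z ∈ Hsub := Subgroup.subset_closure ⟨z, rfl⟩

lemma SL2_ext {A B : SL2} (h : (A : Matrix (Fin 2) (Fin 2) GaussianInt) = B) : A = B :=
  Subtype.ext h

lemma Usl_mem (a : GaussianInt) : Usl a ∈ Hsub := by
  have : Usl a = Ssl * Ssl * Ep (-a) * Ssl := by
    apply SL2_ext
    rw [Matrix.SpecialLinearGroup.coe_mul, Matrix.SpecialLinearGroup.coe_mul, Matrix.SpecialLinearGroup.coe_mul]; simp only [Usl, Ep]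
    refine Matrix.ext fun i j => ?_
    fin_cases i <;> fin_cases j <;> simp [Matrix.mul_apply, Fin.sum_univ_two]
  rw [this]
  exact mul_mem (mul_mem (mul_mem (Ep_mem 0) (Ep_mem 0)) (Ep_mem (-a))) (Ep_mem 0)

lemma Lsl_mem (a : GaussianInt) : Lsl a ∈ Hsub := by
  have : Lsl a = Ssl * Ssl * Ssl * Ep a := by
    apply SL2_ext
    rw [Matrix.SpecialLinearGroup.coe_mul, Matrix.SpecialLinearGroup.coe_mul, Matrix.SpecialLinearGroup.coe_mul]; simp only [Lsl, Ep]
    refine Matrix.ext fun i j => ?_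
    fin_cases i <;> fin_cases j <;> simp [Matrix.mul_apply, Fin.sum_univ_two]
  rw [this]
  exact mul_mem (mul_mem (mul_mem (Ep_mem 0) (Ep_mem 0)) (Ep_mem 0)) (Ep_mem a)

lemma all_mem : ∀ (n : ℕ) (M : SL2),
    (Zsqrtd.norm ((M : Matrix (Fin 2) (Fin 2) GaussianInt) 1 0)).natAbs = n → M ∈ Hsub := by
  intro n
  induction n using Nat.strong_induction_on with
  | _ n ih =>
    intro M hM
    set A : Matrix (Fin 2) (Fin 2) GaussianInt := (M : Matrix (Fin 2) (Fin 2) GaussianInt) with hA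
    have hdet : A 0 0 * A 1 1 - A 0 1 * A 1 0 = 1 := by
      rw [← Matrix.det_fin_two]; exact M.2
    by_cases hc : A 1 0 = 0
    · -- upper triangular case
      have had : A 0 0 * A 1 1 = 1 := by rw [← hdet, hc]; ring
      have hMval : A = !![A 0 0, A 0 1; 0, A 1 1] := by
        rw [← hc]; exact Matrix.eta_fin_two A
      have : M = Usl (A 0 0) * Lsl (-(A 1 1)) * Usl (A 0 0) * Ssl * Ssl * Ssl
          * Usl (A 1 1 * A 0 1) := by
        apply SL2_ext
        rw [Matrix.SpecialLinearGroup.coe_mul, Matrix.SpecialLinearGroup.coe_mul, Matrix.SpecialLinearGroup.coe_mul, Matrix.SpecialLinearGroup.coe_mul, Matrix.SpecialLinearGroup.coe_mul, Matrix.SpecialLinearGroup.coe_mul]; simp only [Usl, Lsl, Ep]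
        rw [show (M : Matrix (Fin 2) (Fin 2) GaussianInt) = !![A 0 0, A 0 1; 0, A 1 1] from hMval]
        refine Matrix.ext fun i j => ?_
        fin_cases i <;> fin_cases j <;>
          · simp [Matrix.mul_apply, Fin.sum_univ_two]
            first
            | ring1
            | (left; linear_combination -had)
            | linear_combination had
            | linear_combination (A 0 1 * (A 0 0 * A 1 1 - 1) - 1) * had
      rw [this]
      exact mul_mem (mul_mem (mul_mem (mul_mem (mul_mem (mul_mem (Usl_mem _) (Lsl_mem _))
        (Usl_mem _)) (Ep_mem 0)) (Ep_mem 0)) (Ep_mem 0)) (Usl_mem _)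
    · -- Euclidean division step
      set q : GaussianInt := A 0 0 / A 1 0 with hq
      set M' : SL2 := Ssl * Usl (-q) * M with hM'
      have hent : (M' : Matrix (Fin 2) (Fin 2) GaussianInt) 1 0 = -(A 0 0 % A 1 0) := by
        have hmod : A 1 0 * q + A 0 0 % A 1 0 = A 0 0 := EuclideanDomain.div_add_mod _ _
        rw [hM', Matrix.SpecialLinearGroup.coe_mul, Matrix.SpecialLinearGroup.coe_mul]; simp only [Usl, Ep]
        simp [Matrix.mul_apply, Fin.sum_univ_two]
        linear_combination hmod
      have hlt : (Zsqrtd.norm ((M' : Matrix (Fin 2) (Fin 2) GaussianInt) 1 0)).natAbs < n := by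
        rw [hent, Zsqrtd.norm_neg, ← hM]
        exact GaussianInt.natAbs_norm_mod_lt _ hc
      have hM'mem : M' ∈ Hsub := ih _ hlt M' rfl
      have : M = (Ssl * Usl (-q))⁻¹ * M' := by
        rw [hM']; group
      rw [this]
      exact mul_mem (inv_mem (mul_mem (Ep_mem 0) (Usl_mem _))) hM'mem

lemma Hsub_eq_top : Hsub = ⊤ := by
  rw [eq_top_iff]
  intro M _
  exact all_mem _ M rfl

/-! ### Assembling the isomorphism -/

/-- The induced isomorphism on 2×2 matrix unit groups. -/
def g : (Matrix (Fin 2) (Fin 2) (Cl 2))ˣ ≃* (Matrix (Fin 2) (Fin 2) GaussianInt)ˣ :=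
  Units.mapEquiv (RingEquiv.mapMatrix e).toMulEquiv

lemma g_Eu (x : Cl 2) : g (Eu 2 x) = Matrix.SpecialLinearGroup.toGL (Ep (e x)) := by
  apply Units.ext
  show (RingEquiv.mapMatrix e) (!![x, 1; -1, 0]) = (Ep (e x) : Matrix (Fin 2) (Fin 2) GaussianInt)
  refine Matrix.ext fun i j => ?_
  fin_cases i <;> fin_cases j <;>
    simp [RingEquiv.mapMatrix_apply, Matrix.map_apply, Ep]

lemma toGL_injective :
    Function.Injective (Matrix.SpecialLinearGroup.toGL :
      SL2 →* Matrix.GeneralLinearGroup (Fin 2) GaussianInt) := by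
  intro a b h
  exact Subtype.ext (congrArg Units.val h)

lemma map_E2Gamma :
    Subgroup.map (g : (Matrix (Fin 2) (Fin 2) (Cl 2))ˣ →* (Matrix (Fin 2) (Fin 2) GaussianInt)ˣ)
      (E2Gamma 2)
      = (Matrix.SpecialLinearGroup.toGL (n := Fin 2) (R := GaussianInt)).range := by
  rw [E2Gamma, MonoidHom.map_closure, MonoidHom.range_eq_map, ← Hsub_eq_top, Hsub,
    MonoidHom.map_closure]
  congr 1
  ext u
  constructor
  · rintro ⟨v, ⟨x, -, rfl⟩, rfl⟩
    exact ⟨Ep (e x), ⟨e x, rfl⟩, (g_Eu x).symm⟩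
  · rintro ⟨v, ⟨z, rfl⟩, rfl⟩
    refine ⟨Eu 2 (e.symm z), ⟨e.symm z, ?_, rfl⟩, ?_⟩
    · rw [Vn_two_eq_top]; trivial
    · show g (Eu 2 (e.symm z)) = _
      rw [g_Eu, RingEquiv.apply_symm_apply]

end E2Aux

/-- `E₂(Γ₂(ℤ))` is isomorphic to `SL₂(ℤ[i])`. -/
theorem E2Gamma_two_iso_SL2_gaussianInt :
    Nonempty (↥(E2Gamma 2) ≃* Matrix.SpecialLinearGroup (Fin 2) GaussianInt) := by
  exact ⟨(E2Aux.g.subgroupMap (E2Gamma 2)).trans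
    ((MulEquiv.subgroupCongr E2Aux.map_E2Gamma).trans
      (MonoidHom.ofInjective E2Aux.toGL_injective).symm)⟩
end
end
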